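/- arXiv:0904.1150 — 2 statements merged into one kernel-verified Lean document; each statement's English description precedes it below -/
import Mathlib

section
/- BCJR forward recursion for the a posteriori vector: For a non-controllable FSC with a source in 𝒫_v(u,u) (0 ≤ u ≤ v), let t be such that 1 ≤ t − u and t ≤ N, and let y^{t-u} be an output history with Pr(Y^{t-u} = y^{t-u}) > 0. Writing α_{t-1} = α_{t-1}(y^{t-u-1}) and defining β(x_{t-v}^t, s_{t-v-1}^{t-u}) := α_{t-1}(x_{t-v}^{t-1}, s_{t-v-1}^{t-u-1}) · π_t(x_t | x_{t-v}^{t-1}, s_{t-v-1}^{t-u-1}, y^{t-u-1}) · W(y_{t-u}, s_{t-u} | x_{t-u}, s_{t-u-1}), the a posteriori vector satisfies α_t(x_{t-v+1}^t, s_{t-v}^{t-u}) = ( Σ_{x_{t-v} ∈ 𝒳, s_{t-v-1} ∈ 𝒮} β(x_{t-v}^t, s_{t-v-1}^{t-u}) ) / ( Σ_{x_{t-v}^t, s_{t-v-1}^{t-u}} β(x_{t-v}^t, s_{t-v-1}^{t-u}) ) (windows truncated for small indices). -/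
/-!
Common framework: finite-state channels (FSCs), non-controllable FSCs,
sources with delayed feedback (FB) and delayed state information (SI),
induced joint pmfs, conditional probabilities and conditional mutual
information, following Huang–Kavčić–Ma, "Upper Bounds on the Capacities of
Non-Controllable Finite-State Channels with/without Feedback".

Time convention: for a horizon `N`, the channel inputs are `X_1,…,X_N`
(coordinate `x i` of `x : Fin N → X` is `X_{i+1}`), the states are
`S_0,…,S_N` (coordinate `s j` of `s : Fin (N+1) → S` is `S_j`), and the
outputs are `Y_1,…,Y_N` (coordinate `y i` is `Y_{i+1}`).
-/

open Finset

noncomputable section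

namespace FSCPaper

/-- Probability of an event under a pmf `p` on a finite sample space. -/
def prE {Ω : Type} [Fintype Ω] (p : Ω → ℝ) (E : Set Ω) : ℝ :=
  ∑ ω : Ω, E.indicator p ω

/-- Conditional probability `Pr(E | F)`, a ratio of (sums of) marginals
(with the `0/0 = 0` junk-value convention of real division). -/
def condPr {Ω : Type} [Fintype Ω] (p : Ω → ℝ) (E F : Set Ω) : ℝ :=
  prE p (E ∩ F) / prE p F

/-- The conditional pmf `Pr(· | F)` given an event `F`. -/
def condPMF {Ω : Type} [Fintype Ω] (p : Ω → ℝ) (F : Set Ω) : Ω → ℝ :=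
  fun ω => F.indicator p ω / prE p F

/-- Conditional mutual information `I(A;B|C)` of finite-valued random
variables `fA, fB, fC` under the pmf `p`; zero-probability terms
contribute `0` (the factor in front of the logarithm vanishes). -/
def condMI {Ω A B C : Type} [Fintype Ω] [Fintype A] [Fintype B] [Fintype C]
    (p : Ω → ℝ) (fA : Ω → A) (fB : Ω → B) (fC : Ω → C) : ℝ :=
  ∑ a : A, ∑ b : B, ∑ c : C,
    prE p {ω | fA ω = a ∧ fB ω = b ∧ fC ω = c} *
      Real.log (condPr p {ω | fA ω = a ∧ fB ω = b} {ω | fC ω = c} /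
        (condPr p {ω | fA ω = a} {ω | fC ω = c} *
          condPr p {ω | fB ω = b} {ω | fC ω = c}))

/-- Trajectories `(x_1^N, s_0^N, y_1^N)`. -/
abbrev Traj (X S Y : Type) (N : ℕ) : Type :=
  (Fin N → X) × (Fin (N + 1) → S) × (Fin N → Y)

/-- A general finite-state channel: channel transition kernel
`W(y, s' | x, s)` (a pmf on `Y × S` for each `(x,s)`) and initial state
pmf `init`. -/
structure FSC (X S Y : Type) [Fintype S] [Fintype Y] : Type where
  W : Y → S → X → S → ℝ
  init : S → ℝ
  W_nonneg : ∀ y s' x s, 0 ≤ W y s' x s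
  W_sum : ∀ x s, (∑ y : Y, ∑ s' : S, W y s' x s) = 1
  init_nonneg : ∀ s, 0 ≤ init s
  init_sum : (∑ s : S, init s) = 1

/-- A source without feedback: conditional pmfs `π_t(x_t | x^{t-1})`;
`pol t x a` is the probability that `X_{t+1} = a` given that the previous
inputs are the corresponding coordinates of `x` (by `causal` it depends
only on the coordinates `x j` with `j < t`). -/
structure FFSource (X : Type) [Fintype X] (N : ℕ) : Type where
  pol : Fin N → (Fin N → X) → X → ℝ
  nonneg : ∀ t x a, 0 ≤ pol t x a
  sum_one : ∀ t x, (∑ a : X, pol t x a) = 1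
  causal : ∀ (t : Fin N) (x x' : Fin N → X),
    (∀ j : Fin N, (j : ℕ) < (t : ℕ) → x j = x' j) → pol t x = pol t x'

/-- A non-controllable finite-state channel: output kernel `P(y|x,s)`,
free state-transition kernel `Q(s'|s)`, and initial state pmf `init`. -/
structure NCFSC (X S Y : Type) [Fintype S] [Fintype Y] : Type where
  P : Y → X → S → ℝ
  Q : S → S → ℝ
  init : S → ℝ
  P_nonneg : ∀ y x s, 0 ≤ P y x s
  P_sum : ∀ x s, (∑ y : Y, P y x s) = 1
  Q_nonneg : ∀ s' s, 0 ≤ Q s' s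
  Q_sum : ∀ s, (∑ s' : S, Q s' s) = 1
  init_nonneg : ∀ s, 0 ≤ init s
  init_sum : (∑ s : S, init s) = 1

/-- A source with `u`-delayed feedback and `u`-delayed state information
(the set `𝒫(u,u)`): `pol t x s y a` is
`π_{t+1}(a | x^{t}, s_0^{t-u}, y^{t-u})` in 1-based time; by `causal` it
depends on `(x, s, y)` only through the coordinates
`x_1^{t}` (indices `j < t`), `s_0^{t-u}` (indices `j + u ≤ t`) and
`y_1^{t-u}` (indices `j + u + 1 ≤ t`), i.e. on the past inputs, the
`u`-delayed state information and the `u`-delayed output feedback. -/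
structure Source (X S Y : Type) [Fintype X] [Fintype S] [Fintype Y] (N u : ℕ) : Type where
  pol : Fin N → (Fin N → X) → (Fin (N + 1) → S) → (Fin N → Y) → X → ℝ
  nonneg : ∀ t x s y a, 0 ≤ pol t x s y a
  sum_one : ∀ t x s y, (∑ a : X, pol t x s y a) = 1
  causal : ∀ (t : Fin N) (x x' : Fin N → X) (s s' : Fin (N + 1) → S) (y y' : Fin N → Y),
    (∀ j : Fin N, (j : ℕ) < (t : ℕ) → x j = x' j) →
    (∀ j : Fin (N + 1), (j : ℕ) + u ≤ (t : ℕ) → s j = s' j) →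
    (∀ j : Fin N, (j : ℕ) + u + 1 ≤ (t : ℕ) → y j = y' j) →
    pol t x s y = pol t x' s' y'

variable {X S Y : Type} [Fintype X] [Fintype S] [Fintype Y]

/-- Joint pmf induced by a general FSC and a feedforward source:
`Pr(x^N, s_0^N, y^N) = μ(s_0) ∏_t π_t(x_t|x^{t-1}) W(y_t, s_t | x_t, s_{t-1})`. -/
def jointP0 {N : ℕ} (ch : FSC X S Y) (src : FFSource X N) (ω : Traj X S Y N) : ℝ :=
  ch.init (ω.2.1 0) *
    ∏ i : Fin N,
      src.pol i ω.1 (ω.1 i) *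
        ch.W (ω.2.2 i) (ω.2.1 i.succ) (ω.1 i) (ω.2.1 i.castSucc)

/-- Joint channel transition `W(y, s' | x, s) = P(y|x,s) · Q(s'|s)` of a
non-controllable FSC. -/
def NCFSC.W (ch : NCFSC X S Y) (y : Y) (s' : S) (x : X) (s : S) : ℝ :=
  ch.P y x s * ch.Q s' s

/-- Joint pmf induced by a non-controllable FSC and a source in `𝒫(u,u)`:
`Pr(x^N, s_0^N, y^N) = μ(s_0) ∏_t π_t(x_t|x^{t-1},s_0^{t-u-1},y^{t-u-1}) W(y_t,s_t|x_t,s_{t-1})`. -/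
def jointP {N u : ℕ} (ch : NCFSC X S Y) (src : Source X S Y N u) (ω : Traj X S Y N) : ℝ :=
  ch.init (ω.2.1 0) *
    ∏ i : Fin N,
      src.pol i ω.1 ω.2.1 ω.2.2 (ω.1 i) *
        ch.W (ω.2.2 i) (ω.2.1 i.succ) (ω.1 i) (ω.2.1 i.castSucc)

/-- A source in `𝒫(u,u)` is a `v`-th order conditional Markov source
(the set `𝒫_v(u,u)`) if each policy depends on its arguments only through
`(x_{t-v}^{t-1}, s_{t-v-1}^{t-u-1}, y^{t-u-1})` (windows truncated for
small `t`). -/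
def IsMarkov {N u : ℕ} (v : ℕ) (src : Source X S Y N u) : Prop :=
  ∀ (t : Fin N) (x x' : Fin N → X) (s s' : Fin (N + 1) → S) (y y' : Fin N → Y),
    (∀ j : Fin N, (t : ℕ) ≤ (j : ℕ) + v ∧ (j : ℕ) < (t : ℕ) → x j = x' j) →
    (∀ j : Fin (N + 1), (t : ℕ) ≤ (j : ℕ) + v ∧ (j : ℕ) + u ≤ (t : ℕ) → s j = s' j) →
    (∀ j : Fin N, (j : ℕ) + u + 1 ≤ (t : ℕ) → y j = y' j) →
    src.pol t x s y = src.pol t x' s' y'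

/-- `Σ_{t=1}^N I(X^t, S_0^{t-v-1}; Y_t | Y^{t-1})` under the joint law of
the source (state window omitted/truncated when `t - v - 1 < 0`). -/
def objFull {N u : ℕ} (v : ℕ) (ch : NCFSC X S Y) (src : Source X S Y N u) : ℝ :=
  ∑ t : Fin N,
    condMI (jointP ch src)
      (fun ω : Traj X S Y N =>
        ((fun j : {j : Fin N // (j : ℕ) ≤ (t : ℕ)} => ω.1 j.1),
          fun j : {j : Fin (N + 1) // (j : ℕ) + v ≤ (t : ℕ)} => ω.2.1 j.1))
      (fun ω => ω.2.2 t)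
      (fun ω => fun j : {j : Fin N // (j : ℕ) < (t : ℕ)} => ω.2.2 j.1)

/-- `Σ_{t=1}^N I(X_{t-v}^t, S_{t-v-1}; Y_t | Y^{t-1})` under the joint law
of the source (windows truncated for small `t`; the singleton state window
`S_{t-v-1}` is encoded by the condition `j + v = t - 1` in 0-based time and
is empty for `t ≤ v`). -/
def objWin {N u : ℕ} (v : ℕ) (ch : NCFSC X S Y) (src : Source X S Y N u) : ℝ :=
  ∑ t : Fin N,
    condMI (jointP ch src)
      (fun ω : Traj X S Y N =>
        ((fun j : {j : Fin N // (t : ℕ) ≤ (j : ℕ) + v ∧ (j : ℕ) ≤ (t : ℕ)} => ω.1 j.1),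
          fun j : {j : Fin (N + 1) // (j : ℕ) + v = (t : ℕ)} => ω.2.1 j.1))
      (fun ω => ω.2.2 t)
      (fun ω => fun j : {j : Fin N // (j : ℕ) < (t : ℕ)} => ω.2.2 j.1)

/-- Directed information `I(X^N → Y^N) = Σ_{t=1}^N I(X^t; Y_t | Y^{t-1})`. -/
def directedInfo {N u : ℕ} (ch : NCFSC X S Y) (src : Source X S Y N u) : ℝ :=
  ∑ t : Fin N,
    condMI (jointP ch src)
      (fun ω : Traj X S Y N => fun j : {j : Fin N // (j : ℕ) ≤ (t : ℕ)} => ω.1 j.1)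
      (fun ω => ω.2.2 t)
      (fun ω => fun j : {j : Fin N // (j : ℕ) < (t : ℕ)} => ω.2.2 j.1)

/-- The a posteriori vectors `α_{t-1}(y^{t-u-1})` and `α_{t-1}(ỹ^{t-u-1})`
(at the 1-based time `(t:ℕ)+1`) induced by the two output histories `yh`
and `yh'` coincide: for all window values `(x_{t-v}^{t-1}, s_{t-v-1}^{t-u-1})`
the two a posteriori probabilities agree. -/
def alphaWinEq {N u : ℕ} (v : ℕ) (ch : NCFSC X S Y) (src : Source X S Y N u)
    (t : Fin N) (yh yh' : Fin N → Y) : Prop :=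
  ∀ (xf : Fin N → X) (sf : Fin (N + 1) → S),
    condPr (jointP ch src)
        {ω : Traj X S Y N |
          (∀ j : Fin N, (t : ℕ) ≤ (j : ℕ) + v ∧ (j : ℕ) < (t : ℕ) → ω.1 j = xf j) ∧
            ∀ j : Fin (N + 1), (t : ℕ) ≤ (j : ℕ) + v ∧ (j : ℕ) + u ≤ (t : ℕ) → ω.2.1 j = sf j}
        {ω : Traj X S Y N | ∀ j : Fin N, (j : ℕ) + u + 1 ≤ (t : ℕ) → ω.2.2 j = yh j} =
      condPr (jointP ch src)
        {ω : Traj X S Y N |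
          (∀ j : Fin N, (t : ℕ) ≤ (j : ℕ) + v ∧ (j : ℕ) < (t : ℕ) → ω.1 j = xf j) ∧
            ∀ j : Fin (N + 1), (t : ℕ) ≤ (j : ℕ) + v ∧ (j : ℕ) + u ≤ (t : ℕ) → ω.2.1 j = sf j}
        {ω : Traj X S Y N | ∀ j : Fin N, (j : ℕ) + u + 1 ≤ (t : ℕ) → ω.2.2 j = yh' j}

/-- The set `𝒫'_v(u,u)`: the policy at each time gives the same value on
any two positive-probability output histories inducing the same a
posteriori vector. -/
def AlphaPolicy {N u : ℕ} (v : ℕ) (ch : NCFSC X S Y) (src : Source X S Y N u) : Prop :=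
  ∀ (t : Fin N) (yh yh' : Fin N → Y),
    0 < prE (jointP ch src)
        {ω : Traj X S Y N | ∀ j : Fin N, (j : ℕ) + u + 1 ≤ (t : ℕ) → ω.2.2 j = yh j} →
    0 < prE (jointP ch src)
        {ω : Traj X S Y N | ∀ j : Fin N, (j : ℕ) + u + 1 ≤ (t : ℕ) → ω.2.2 j = yh' j} →
    alphaWinEq v ch src t yh yh' →
    ∀ (xf : Fin N → X) (sf : Fin (N + 1) → S) (a : X),
      src.pol t xf sf yh a = src.pol t xf sf yh' a

/-- The summand of the BCJR forward recursion at (1-based) time `(t:ℕ)+1`: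
`β(x_{t-v}^t, s_{t-v-1}^{t-u}) = α_{t-1}(x_{t-v}^{t-1}, s_{t-v-1}^{t-u-1})
  · π_t(x_t | x_{t-v}^{t-1}, s_{t-v-1}^{t-u-1}, y^{t-u-1})
  · W(y_{t-u}, s_{t-u} | x_{t-u}, s_{t-u-1})`,
where the window values are read off the full functions `xf, sf` and
`α_{t-1}` is the a posteriori probability given `Y^{t-u-1} = y^{t-u-1}`. -/
def bcjrTerm {X S Y : Type} [Fintype X] [Fintype S] [Fintype Y] {N u : ℕ} (v : ℕ)
    (ch : NCFSC X S Y) (src : Source X S Y N u) (t : Fin N) (yh : Fin N → Y)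
    (xf : Fin N → X) (sf : Fin (N + 1) → S) : ℝ :=
  condPr (jointP ch src)
      {ω : Traj X S Y N |
        (∀ j : Fin N, (t : ℕ) ≤ (j : ℕ) + v ∧ (j : ℕ) < (t : ℕ) → ω.1 j = xf j) ∧
          ∀ j : Fin (N + 1), (t : ℕ) ≤ (j : ℕ) + v ∧ (j : ℕ) + u ≤ (t : ℕ) → ω.2.1 j = sf j}
      {ω : Traj X S Y N | ∀ j : Fin N, (j : ℕ) + u + 1 ≤ (t : ℕ) → ω.2.2 j = yh j} *
    src.pol t xf sf yh (xf t) *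
    ch.W (yh ⟨(t : ℕ) - u, by have := t.isLt; omega⟩)
      (sf ⟨(t : ℕ) + 1 - u, by have := t.isLt; omega⟩)
      (xf ⟨(t : ℕ) - u, by have := t.isLt; omega⟩)
      (sf ⟨(t : ℕ) - u, by have := t.isLt; omega⟩)

open scoped Classical

section BCJRAux
set_option linter.unusedSectionVars false

open Function

/-! ### Generic marginalization machinery -/

private lemma sum_sum_update {ι : Type} [Fintype ι] [DecidableEq ι] {κ : ι → Type}
    [∀ i, Fintype (κ i)] (i : ι) (f : (∀ j, κ j) → ℝ) :
    ∑ x : ∀ j, κ j, ∑ a : κ i, f (Function.update x i a)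
      = (Fintype.card (κ i) : ℝ) * ∑ x : ∀ j, κ j, f x := by
  have hinv : Function.Involutive
      (fun p : (∀ j, κ j) × κ i => (Function.update p.1 i p.2, p.1 i)) := by
    rintro ⟨x, a⟩
    simp only [Function.update_self, Function.update_idem, Function.update_eq_self]
  calc ∑ x : ∀ j, κ j, ∑ a : κ i, f (Function.update x i a)
      = ∑ p : (∀ j, κ j) × κ i, f (Function.update p.1 i p.2) :=
        (Fintype.sum_prod_type (f := fun p : (∀ j, κ j) × κ i =>
          f (Function.update p.1 i p.2))).symm
    _ = ∑ p : (∀ j, κ j) × κ i, f p.1 :=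
        Equiv.sum_comp hinv.toPerm (fun p : (∀ j, κ j) × κ i => f p.1)
    _ = ∑ x : ∀ j, κ j, ∑ _a : κ i, f x :=
        Fintype.sum_prod_type (f := fun p : (∀ j, κ j) × κ i => f p.1)
    _ = (Fintype.card (κ i) : ℝ) * ∑ x : ∀ j, κ j, f x := by
        simp [Finset.sum_const, Finset.mul_sum, mul_comm]

private lemma marg_pi {ι : Type} [Fintype ι] [DecidableEq ι] {κ : ι → Type}
    [∀ i, Fintype (κ i)] (i : ι) (F G : (∀ j, κ j) → ℝ)
    (hF : ∀ x a, F (Function.update x i a) = F x)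
    (hG : ∀ x, ∑ a : κ i, G (Function.update x i a) = 1) :
    ∑ x : ∀ j, κ j, F x * G x = (Fintype.card (κ i) : ℝ)⁻¹ * ∑ x : ∀ j, κ j, F x := by
  by_cases hE : IsEmpty (∀ j, κ j)
  · simp [Finset.univ_eq_empty]
  · have hne : Nonempty (∀ j, κ j) := not_isEmpty_iff.mp hE
    have hnei : Nonempty (κ i) := ⟨Classical.choice hne i⟩
    have hcard : (Fintype.card (κ i) : ℝ) ≠ 0 := Nat.cast_ne_zero.mpr Fintype.card_ne_zero
    have key := sum_sum_update i (fun x => F x * G x)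
    have h2 : ∀ x : ∀ j, κ j,
        (∑ a : κ i, F (Function.update x i a) * G (Function.update x i a)) = F x := by
      intro x
      simp only [hF]
      rw [← Finset.mul_sum, hG, mul_one]
    rw [Finset.sum_congr rfl (fun x _ => h2 x)] at key
    rw [key, inv_mul_cancel_left₀ hcard]

/-! ### Trajectory-level marginalization -/

variable {X S Y : Type} [Fintype X] [Fintype S] [Fintype Y] {N u : ℕ}

private def updX (ω : Traj X S Y N) (i : Fin N) (a : X) : Traj X S Y N :=
  (Function.update ω.1 i a, ω.2.1, ω.2.2)

private def updS (ω : Traj X S Y N) (k : Fin (N + 1)) (b : S) : Traj X S Y N :=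
  (ω.1, Function.update ω.2.1 k b, ω.2.2)

private def updY (ω : Traj X S Y N) (i : Fin N) (c : Y) : Traj X S Y N :=
  (ω.1, ω.2.1, Function.update ω.2.2 i c)

private lemma sum_traj (f : Traj X S Y N → ℝ) :
    ∑ ω : Traj X S Y N, f ω
      = ∑ x : Fin N → X, ∑ s : Fin (N + 1) → S, ∑ y : Fin N → Y, f (x, s, y) := by
  rw [Fintype.sum_prod_type (f := f)]
  exact Finset.sum_congr rfl fun x _ => Fintype.sum_prod_type (f := fun p => f (x, p.1, p.2))

private lemma margX (i : Fin N) (F G : Traj X S Y N → ℝ)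
    (hF : ∀ ω a, F (updX ω i a) = F ω) (hG : ∀ ω, ∑ a : X, G (updX ω i a) = 1) :
    ∑ ω : Traj X S Y N, F ω * G ω
      = (Fintype.card X : ℝ)⁻¹ * ∑ ω : Traj X S Y N, F ω := by
  rw [sum_traj (fun ω => F ω * G ω), sum_traj F]
  have h : ∀ (s : Fin (N + 1) → S) (y : Fin N → Y),
      (∑ x : Fin N → X, F (x, s, y) * G (x, s, y))
        = (Fintype.card X : ℝ)⁻¹ * ∑ x : Fin N → X, F (x, s, y) :=
    fun s y => marg_pi i (fun x => F (x, s, y)) (fun x => G (x, s, y))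
      (fun x a => hF (x, s, y) a) (fun x => hG (x, s, y))
  rw [show (∑ x : Fin N → X, ∑ s : Fin (N + 1) → S, ∑ y : Fin N → Y,
        F (x, s, y) * G (x, s, y))
      = ∑ s : Fin (N + 1) → S, ∑ y : Fin N → Y, ∑ x : Fin N → X,
        F (x, s, y) * G (x, s, y) from by
    calc (∑ x : Fin N → X, ∑ s : Fin (N + 1) → S, ∑ y : Fin N → Y,
          F (x, s, y) * G (x, s, y))
        = ∑ s : Fin (N + 1) → S, ∑ x : Fin N → X, ∑ y : Fin N → Y,
          F (x, s, y) * G (x, s, y) := Finset.sum_comm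
      _ = ∑ s : Fin (N + 1) → S, ∑ y : Fin N → Y, ∑ x : Fin N → X,
          F (x, s, y) * G (x, s, y) := Finset.sum_congr rfl fun s _ => Finset.sum_comm]
  simp only [h]
  simp only [← Finset.mul_sum]
  congr 1
  calc (∑ s : Fin (N + 1) → S, ∑ y : Fin N → Y, ∑ x : Fin N → X, F (x, s, y))
      = ∑ s : Fin (N + 1) → S, ∑ x : Fin N → X, ∑ y : Fin N → Y, F (x, s, y) :=
        Finset.sum_congr rfl fun s _ => Finset.sum_comm
    _ = ∑ x : Fin N → X, ∑ s : Fin (N + 1) → S, ∑ y : Fin N → Y, F (x, s, y) :=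
        Finset.sum_comm

private lemma margS (k : Fin (N + 1)) (F G : Traj X S Y N → ℝ)
    (hF : ∀ ω b, F (updS ω k b) = F ω) (hG : ∀ ω, ∑ b : S, G (updS ω k b) = 1) :
    ∑ ω : Traj X S Y N, F ω * G ω
      = (Fintype.card S : ℝ)⁻¹ * ∑ ω : Traj X S Y N, F ω := by
  rw [sum_traj (fun ω => F ω * G ω), sum_traj F]
  have h : ∀ (x : Fin N → X) (y : Fin N → Y),
      (∑ s : Fin (N + 1) → S, F (x, s, y) * G (x, s, y))
        = (Fintype.card S : ℝ)⁻¹ * ∑ s : Fin (N + 1) → S, F (x, s, y) :=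
    fun x y => marg_pi k (fun s => F (x, s, y)) (fun s => G (x, s, y))
      (fun s b => hF (x, s, y) b) (fun s => hG (x, s, y))
  rw [show (∑ x : Fin N → X, ∑ s : Fin (N + 1) → S, ∑ y : Fin N → Y,
        F (x, s, y) * G (x, s, y))
      = ∑ x : Fin N → X, ∑ y : Fin N → Y, ∑ s : Fin (N + 1) → S,
        F (x, s, y) * G (x, s, y) from
    Finset.sum_congr rfl fun x _ => Finset.sum_comm]
  simp only [h]
  simp only [← Finset.mul_sum]
  congr 1
  exact Finset.sum_congr rfl fun x _ => Finset.sum_comm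

private lemma margY (i : Fin N) (F G : Traj X S Y N → ℝ)
    (hF : ∀ ω c, F (updY ω i c) = F ω) (hG : ∀ ω, ∑ c : Y, G (updY ω i c) = 1) :
    ∑ ω : Traj X S Y N, F ω * G ω
      = (Fintype.card Y : ℝ)⁻¹ * ∑ ω : Traj X S Y N, F ω := by
  rw [sum_traj (fun ω => F ω * G ω), sum_traj F]
  have h : ∀ (x : Fin N → X) (s : Fin (N + 1) → S),
      (∑ y : Fin N → Y, F (x, s, y) * G (x, s, y))
        = (Fintype.card Y : ℝ)⁻¹ * ∑ y : Fin N → Y, F (x, s, y) :=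
    fun x s => marg_pi i (fun y => F (x, s, y)) (fun y => G (x, s, y))
      (fun y c => hF (x, s, y) c) (fun y => hG (x, s, y))
  simp only [h]
  simp only [← Finset.mul_sum]

/-! ### The factored form of the joint pmf -/

private def polF (src : Source X S Y N u) (i : Fin N) (ω : Traj X S Y N) : ℝ :=
  src.pol i ω.1 ω.2.1 ω.2.2 (ω.1 i)

private def PFf (ch : NCFSC X S Y) (i : Fin N) (ω : Traj X S Y N) : ℝ :=
  ch.P (ω.2.2 i) (ω.1 i) (ω.2.1 i.castSucc)

private def QFf (ch : NCFSC X S Y) (i : Fin N) (ω : Traj X S Y N) : ℝ :=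
  ch.Q (ω.2.1 i.succ) (ω.2.1 i.castSucc)

open scoped Classical in
private def Zf (ch : NCFSC X S Y) (src : Source X S Y N u) (A B C : ℕ)
    (ω : Traj X S Y N) : ℝ :=
  ch.init (ω.2.1 0) *
    ((∏ i : Fin N, if (i : ℕ) < A then polF src i ω else 1) *
      ((∏ i : Fin N, if (i : ℕ) < B then PFf ch i ω else 1) *
        (∏ i : Fin N, if (i : ℕ) < C then QFf ch i ω else 1)))

private lemma jointP_eq_Zf (ch : NCFSC X S Y) (src : Source X S Y N u)
    (ω : Traj X S Y N) : jointP ch src ω = Zf ch src N N N ω := by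
  simp only [Zf, jointP, NCFSC.W, polF, PFf, QFf, Fin.is_lt, if_true]
  rw [← Finset.prod_mul_distrib, ← Finset.prod_mul_distrib]

private lemma prod_if_succ {A : ℕ} (hA : A < N) (f : Fin N → ℝ) :
    (∏ i : Fin N, if (i : ℕ) < A + 1 then f i else 1)
      = (∏ i : Fin N, if (i : ℕ) < A then f i else 1) * f ⟨A, hA⟩ := by
  classical
  rw [← Finset.prod_filter, ← Finset.prod_filter]
  have hins : Finset.filter (fun i : Fin N => (i : ℕ) < A + 1) Finset.univ
      = insert ⟨A, hA⟩ (Finset.filter (fun i : Fin N => (i : ℕ) < A) Finset.univ) := by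
    ext j
    simp [Fin.ext_iff]
    omega
  rw [hins, Finset.prod_insert (by simp)]
  ring

/-! ### Invariance of the factors under coordinate updates -/

private lemma polF_updX (src : Source X S Y N u) (j i : Fin N) (h : (j : ℕ) < (i : ℕ))
    (ω : Traj X S Y N) (a : X) : polF src j (updX ω i a) = polF src j ω := by
  simp only [polF, updX]
  rw [Function.update_of_ne (Fin.ne_of_val_ne (Nat.ne_of_lt h))]
  exact congrFun (src.causal j _ ω.1 ω.2.1 ω.2.1 ω.2.2 ω.2.2
    (fun k hk => Function.update_of_ne (Fin.ne_of_val_ne (by omega)) _ _)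
    (fun _ _ => rfl) (fun _ _ => rfl)) _

private lemma polF_updY (src : Source X S Y N u) (j i : Fin N) (h : (j : ℕ) ≤ (i : ℕ) + u)
    (ω : Traj X S Y N) (c : Y) : polF src j (updY ω i c) = polF src j ω := by
  simp only [polF, updY]
  exact congrFun (src.causal j ω.1 ω.1 ω.2.1 ω.2.1 _ ω.2.2
    (fun _ _ => rfl) (fun _ _ => rfl)
    (fun k hk => Function.update_of_ne (Fin.ne_of_val_ne (by omega)) _ _)) _

private lemma polF_updS (src : Source X S Y N u) (j : Fin N) (k : Fin (N + 1))
    (h : (j : ℕ) < (k : ℕ) + u) (ω : Traj X S Y N) (b : S) :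
    polF src j (updS ω k b) = polF src j ω := by
  simp only [polF, updS]
  exact congrFun (src.causal j ω.1 ω.1 _ ω.2.1 ω.2.2 ω.2.2
    (fun _ _ => rfl)
    (fun m hm => Function.update_of_ne (Fin.ne_of_val_ne (by omega)) _ _)
    (fun _ _ => rfl)) _

private lemma PFf_updX (ch : NCFSC X S Y) (j i : Fin N) (h : (j : ℕ) ≠ (i : ℕ))
    (ω : Traj X S Y N) (a : X) : PFf ch j (updX ω i a) = PFf ch j ω := by
  simp only [PFf, updX]
  rw [Function.update_of_ne (Fin.ne_of_val_ne h)]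

private lemma PFf_updY (ch : NCFSC X S Y) (j i : Fin N) (h : (j : ℕ) ≠ (i : ℕ))
    (ω : Traj X S Y N) (c : Y) : PFf ch j (updY ω i c) = PFf ch j ω := by
  simp only [PFf, updY]
  rw [Function.update_of_ne (Fin.ne_of_val_ne h)]

private lemma PFf_updS (ch : NCFSC X S Y) (j : Fin N) (k : Fin (N + 1))
    (h : (j : ℕ) ≠ (k : ℕ)) (ω : Traj X S Y N) (b : S) :
    PFf ch j (updS ω k b) = PFf ch j ω := by
  simp only [PFf, updS]
  rw [Function.update_of_ne (Fin.ne_of_val_ne (by simpa using h))]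

private lemma QFf_updS (ch : NCFSC X S Y) (j : Fin N) (k : Fin (N + 1))
    (h1 : (j : ℕ) ≠ (k : ℕ)) (h2 : (j : ℕ) + 1 ≠ (k : ℕ)) (ω : Traj X S Y N) (b : S) :
    QFf ch j (updS ω k b) = QFf ch j ω := by
  simp only [QFf, updS]
  rw [Function.update_of_ne (Fin.ne_of_val_ne (by simpa using h2)),
    Function.update_of_ne (Fin.ne_of_val_ne (by simpa using h1))]

private lemma Zf_updX (ch : NCFSC X S Y) (src : Source X S Y N u) (A B C : ℕ) (i : Fin N)
    (hA : A ≤ (i : ℕ)) (hB : B ≤ (i : ℕ)) (ω : Traj X S Y N) (a : X) :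
    Zf ch src A B C (updX ω i a) = Zf ch src A B C ω := by
  unfold Zf
  have e2 : (∏ j : Fin N, if (j : ℕ) < A then polF src j (updX ω i a) else 1)
      = ∏ j : Fin N, if (j : ℕ) < A then polF src j ω else 1 :=
    Finset.prod_congr rfl fun j _ => by
      split_ifs with hj
      · exact polF_updX src j i (by omega) ω a
      · rfl
  have e3 : (∏ j : Fin N, if (j : ℕ) < B then PFf ch j (updX ω i a) else 1)
      = ∏ j : Fin N, if (j : ℕ) < B then PFf ch j ω else 1 :=
    Finset.prod_congr rfl fun j _ => by
      split_ifs with hj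
      · exact PFf_updX ch j i (by omega) ω a
      · rfl
  rw [e2, e3]
  rfl

private lemma Zf_updY (ch : NCFSC X S Y) (src : Source X S Y N u) (A B C : ℕ) (i : Fin N)
    (hA : A ≤ (i : ℕ) + u + 1) (hB : B ≤ (i : ℕ)) (ω : Traj X S Y N) (c : Y) :
    Zf ch src A B C (updY ω i c) = Zf ch src A B C ω := by
  unfold Zf
  have e2 : (∏ j : Fin N, if (j : ℕ) < A then polF src j (updY ω i c) else 1)
      = ∏ j : Fin N, if (j : ℕ) < A then polF src j ω else 1 :=
    Finset.prod_congr rfl fun j _ => by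
      split_ifs with hj
      · exact polF_updY src j i (by omega) ω c
      · rfl
  have e3 : (∏ j : Fin N, if (j : ℕ) < B then PFf ch j (updY ω i c) else 1)
      = ∏ j : Fin N, if (j : ℕ) < B then PFf ch j ω else 1 :=
    Finset.prod_congr rfl fun j _ => by
      split_ifs with hj
      · exact PFf_updY ch j i (by omega) ω c
      · rfl
  rw [e2, e3]
  rfl

private lemma Zf_updS (ch : NCFSC X S Y) (src : Source X S Y N u) (A B C : ℕ)
    (k : Fin (N + 1)) (h0 : (k : ℕ) ≠ 0) (hA : A ≤ (k : ℕ) + u) (hB : B ≤ (k : ℕ))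
    (hC : C < (k : ℕ)) (ω : Traj X S Y N) (b : S) :
    Zf ch src A B C (updS ω k b) = Zf ch src A B C ω := by
  unfold Zf
  have e1 : ch.init ((updS ω k b).2.1 0) = ch.init (ω.2.1 0) := by
    simp only [updS]
    rw [Function.update_of_ne (Fin.ne_of_val_ne (by simpa using (Ne.symm h0)))]
  have e2 : (∏ j : Fin N, if (j : ℕ) < A then polF src j (updS ω k b) else 1)
      = ∏ j : Fin N, if (j : ℕ) < A then polF src j ω else 1 :=
    Finset.prod_congr rfl fun j _ => by
      split_ifs with hj
      · exact polF_updS src j k (by omega) ω b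
      · rfl
  have e3 : (∏ j : Fin N, if (j : ℕ) < B then PFf ch j (updS ω k b) else 1)
      = ∏ j : Fin N, if (j : ℕ) < B then PFf ch j ω else 1 :=
    Finset.prod_congr rfl fun j _ => by
      split_ifs with hj
      · exact PFf_updS ch j k (by omega) ω b
      · rfl
  have e4 : (∏ j : Fin N, if (j : ℕ) < C then QFf ch j (updS ω k b) else 1)
      = ∏ j : Fin N, if (j : ℕ) < C then QFf ch j ω else 1 :=
    Finset.prod_congr rfl fun j _ => by
      split_ifs with hj
      · exact QFf_updS ch j k (by omega) (by omega) ω b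
      · rfl
  rw [e1, e2, e3, e4]

/-! ### Sum-to-one lemmas -/

private lemma polF_upd_self (src : Source X S Y N u) (i : Fin N) (ω : Traj X S Y N) (c : X) :
    polF src i (updX ω i c) = src.pol i ω.1 ω.2.1 ω.2.2 c := by
  simp only [polF, updX, Function.update_self]
  exact congrFun (src.causal i _ ω.1 _ ω.2.1 _ ω.2.2
    (fun k hk => Function.update_of_ne (Fin.ne_of_val_ne (by omega)) _ _)
    (fun _ _ => rfl) (fun _ _ => rfl)) _

private lemma sum_polF (src : Source X S Y N u) (i : Fin N) (ω : Traj X S Y N) :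
    ∑ c : X, polF src i (updX ω i c) = 1 := by
  rw [Finset.sum_congr rfl fun c _ => polF_upd_self src i ω c]
  exact src.sum_one i _ _ _

private lemma PFf_upd_self (ch : NCFSC X S Y) (i : Fin N) (ω : Traj X S Y N) (c : Y) :
    PFf ch i (updY ω i c) = ch.P c (ω.1 i) (ω.2.1 i.castSucc) := by
  simp only [PFf, updY, Function.update_self]

private lemma sum_PFf (ch : NCFSC X S Y) (i : Fin N) (ω : Traj X S Y N) :
    ∑ c : Y, PFf ch i (updY ω i c) = 1 := by
  rw [Finset.sum_congr rfl fun c _ => PFf_upd_self ch i ω c]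
  exact ch.P_sum _ _

private lemma QFf_upd_succ (ch : NCFSC X S Y) (i : Fin N) (ω : Traj X S Y N) (c : S) :
    QFf ch i (updS ω i.succ c) = ch.Q c (ω.2.1 i.castSucc) := by
  simp only [QFf, updS, Function.update_self]
  rw [Function.update_of_ne (Fin.castSucc_lt_succ (i := i)).ne]

private lemma sum_QFf (ch : NCFSC X S Y) (i : Fin N) (ω : Traj X S Y N) :
    ∑ c : S, QFf ch i (updS ω i.succ c) = 1 := by
  rw [Finset.sum_congr rfl fun c _ => QFf_upd_succ ch i ω c]
  exact ch.Q_sum _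

/-! ### The two reduction steps -/

private lemma step1 (ch : NCFSC X S Y) (src : Source X S Y N u) (F : Traj X S Y N → ℝ)
    (a : ℕ) (ha : a < N)
    (hFx : ∀ ω c, F (updX ω ⟨a, ha⟩ c) = F ω)
    (hFy : ∀ ω c, F (updY ω ⟨a, ha⟩ c) = F ω)
    (hFs : ∀ ω c, F (updS ω (⟨a, ha⟩ : Fin N).succ c) = F ω) :
    ∑ ω : Traj X S Y N, F ω * Zf ch src (a + 1) (a + 1) (a + 1) ω
      = (Fintype.card X : ℝ)⁻¹ * ((Fintype.card Y : ℝ)⁻¹ * ((Fintype.card S : ℝ)⁻¹ *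
          ∑ ω : Traj X S Y N, F ω * Zf ch src a a a ω)) := by
  have hk : (((⟨a, ha⟩ : Fin N).succ : Fin (N + 1)) : ℕ) = a + 1 := rfl
  have hi : ((⟨a, ha⟩ : Fin N) : ℕ) = a := rfl
  have hsplit : ∀ ω : Traj X S Y N, F ω * Zf ch src (a + 1) (a + 1) (a + 1) ω
      = ((F ω * Zf ch src a a a ω * polF src ⟨a, ha⟩ ω) * PFf ch ⟨a, ha⟩ ω)
          * QFf ch ⟨a, ha⟩ ω := by
    intro ω
    unfold Zf
    rw [prod_if_succ ha, prod_if_succ ha, prod_if_succ ha]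
    ring
  have hQinv : ∀ (ω : Traj X S Y N) (c : S),
      F (updS ω (⟨a, ha⟩ : Fin N).succ c) *
          Zf ch src a a a (updS ω (⟨a, ha⟩ : Fin N).succ c) *
          polF src ⟨a, ha⟩ (updS ω (⟨a, ha⟩ : Fin N).succ c) *
          PFf ch ⟨a, ha⟩ (updS ω (⟨a, ha⟩ : Fin N).succ c)
        = F ω * Zf ch src a a a ω * polF src ⟨a, ha⟩ ω * PFf ch ⟨a, ha⟩ ω := by
    intro ω c
    rw [hFs, Zf_updS ch src a a a _ (by rw [hk]; omega) (by rw [hk]; omega)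
        (by rw [hk]; omega) (by rw [hk]; omega),
      polF_updS src _ _ (by rw [hk, hi]; omega) ω c,
      PFf_updS ch _ _ (by rw [hk, hi]; omega) ω c]
  have hPinv : ∀ (ω : Traj X S Y N) (c : Y),
      F (updY ω ⟨a, ha⟩ c) * Zf ch src a a a (updY ω ⟨a, ha⟩ c) *
          polF src ⟨a, ha⟩ (updY ω ⟨a, ha⟩ c)
        = F ω * Zf ch src a a a ω * polF src ⟨a, ha⟩ ω := by
    intro ω c
    rw [hFy, Zf_updY ch src a a a _ (by rw [hi]; omega) (by rw [hi]),
      polF_updY src _ _ (by rw [hi]; omega) ω c]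
  have hXinv : ∀ (ω : Traj X S Y N) (c : X),
      F (updX ω ⟨a, ha⟩ c) * Zf ch src a a a (updX ω ⟨a, ha⟩ c)
        = F ω * Zf ch src a a a ω := by
    intro ω c
    rw [hFx, Zf_updX ch src a a a _ (by rw [hi]) (by rw [hi]) ω c]
  calc ∑ ω : Traj X S Y N, F ω * Zf ch src (a + 1) (a + 1) (a + 1) ω
      = ∑ ω : Traj X S Y N,
          (F ω * Zf ch src a a a ω * polF src ⟨a, ha⟩ ω * PFf ch ⟨a, ha⟩ ω)
            * QFf ch ⟨a, ha⟩ ω := Finset.sum_congr rfl fun ω _ => hsplit ω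
    _ = (Fintype.card S : ℝ)⁻¹ * ∑ ω : Traj X S Y N,
          F ω * Zf ch src a a a ω * polF src ⟨a, ha⟩ ω * PFf ch ⟨a, ha⟩ ω :=
        margS (⟨a, ha⟩ : Fin N).succ _ _ hQinv (fun ω => sum_QFf ch ⟨a, ha⟩ ω)
    _ = (Fintype.card S : ℝ)⁻¹ * ((Fintype.card Y : ℝ)⁻¹ * ∑ ω : Traj X S Y N,
          F ω * Zf ch src a a a ω * polF src ⟨a, ha⟩ ω) :=
        congrArg _ (margY ⟨a, ha⟩ _ _ hPinv (fun ω => sum_PFf ch ⟨a, ha⟩ ω))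
    _ = (Fintype.card S : ℝ)⁻¹ * ((Fintype.card Y : ℝ)⁻¹ * ((Fintype.card X : ℝ)⁻¹ *
          ∑ ω : Traj X S Y N, F ω * Zf ch src a a a ω)) :=
        congrArg _ (congrArg _ (margX ⟨a, ha⟩ _ _ hXinv (fun ω => sum_polF src ⟨a, ha⟩ ω)))
    _ = (Fintype.card X : ℝ)⁻¹ * ((Fintype.card Y : ℝ)⁻¹ * ((Fintype.card S : ℝ)⁻¹ *
          ∑ ω : Traj X S Y N, F ω * Zf ch src a a a ω)) := by ring

private lemma step2 (ch : NCFSC X S Y) (src : Source X S Y N u) (F : Traj X S Y N → ℝ)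
    (A b : ℕ) (hb : b < N) (hAb : A ≤ b + u + 1)
    (hFy : ∀ ω c, F (updY ω ⟨b, hb⟩ c) = F ω)
    (hFs : ∀ ω c, F (updS ω (⟨b, hb⟩ : Fin N).succ c) = F ω) :
    ∑ ω : Traj X S Y N, F ω * Zf ch src A (b + 1) (b + 1) ω
      = (Fintype.card Y : ℝ)⁻¹ * ((Fintype.card S : ℝ)⁻¹ *
          ∑ ω : Traj X S Y N, F ω * Zf ch src A b b ω) := by
  have hk : (((⟨b, hb⟩ : Fin N).succ : Fin (N + 1)) : ℕ) = b + 1 := rfl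
  have hi : ((⟨b, hb⟩ : Fin N) : ℕ) = b := rfl
  have hsplit : ∀ ω : Traj X S Y N, F ω * Zf ch src A (b + 1) (b + 1) ω
      = (F ω * Zf ch src A b b ω * PFf ch ⟨b, hb⟩ ω) * QFf ch ⟨b, hb⟩ ω := by
    intro ω
    unfold Zf
    rw [prod_if_succ hb, prod_if_succ hb]
    ring
  have hQinv : ∀ (ω : Traj X S Y N) (c : S),
      F (updS ω (⟨b, hb⟩ : Fin N).succ c) *
          Zf ch src A b b (updS ω (⟨b, hb⟩ : Fin N).succ c) *
          PFf ch ⟨b, hb⟩ (updS ω (⟨b, hb⟩ : Fin N).succ c)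
        = F ω * Zf ch src A b b ω * PFf ch ⟨b, hb⟩ ω := by
    intro ω c
    rw [hFs, Zf_updS ch src A b b _ (by rw [hk]; omega) (by rw [hk]; omega)
        (by rw [hk]; omega) (by rw [hk]; omega),
      PFf_updS ch _ _ (by rw [hk, hi]; omega) ω c]
  have hPinv : ∀ (ω : Traj X S Y N) (c : Y),
      F (updY ω ⟨b, hb⟩ c) * Zf ch src A b b (updY ω ⟨b, hb⟩ c)
        = F ω * Zf ch src A b b ω := by
    intro ω c
    rw [hFy, Zf_updY ch src A b b _ (by rw [hi]; omega) (by rw [hi]) ω c]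
  calc ∑ ω : Traj X S Y N, F ω * Zf ch src A (b + 1) (b + 1) ω
      = ∑ ω : Traj X S Y N,
          (F ω * Zf ch src A b b ω * PFf ch ⟨b, hb⟩ ω) * QFf ch ⟨b, hb⟩ ω :=
        Finset.sum_congr rfl fun ω _ => hsplit ω
    _ = (Fintype.card S : ℝ)⁻¹ * ∑ ω : Traj X S Y N,
          F ω * Zf ch src A b b ω * PFf ch ⟨b, hb⟩ ω :=
        margS (⟨b, hb⟩ : Fin N).succ _ _ hQinv (fun ω => sum_QFf ch ⟨b, hb⟩ ω)
    _ = (Fintype.card S : ℝ)⁻¹ * ((Fintype.card Y : ℝ)⁻¹ * ∑ ω : Traj X S Y N,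
          F ω * Zf ch src A b b ω) :=
        congrArg _ (margY ⟨b, hb⟩ _ _ hPinv (fun ω => sum_PFf ch ⟨b, hb⟩ ω))
    _ = (Fintype.card Y : ℝ)⁻¹ * ((Fintype.card S : ℝ)⁻¹ *
          ∑ ω : Traj X S Y N, F ω * Zf ch src A b b ω) := by ring

/-! ### The full reduction -/

private lemma phase1 (ch : NCFSC X S Y) (src : Source X S Y N u) (F : Traj X S Y N → ℝ) :
    ∀ (d a : ℕ), a + d = N →
    (∀ ω (i : Fin N), a ≤ (i : ℕ) → ∀ c, F (updX ω i c) = F ω) →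
    (∀ ω (i : Fin N), a ≤ (i : ℕ) → ∀ c, F (updY ω i c) = F ω) →
    (∀ ω (k : Fin (N + 1)), a < (k : ℕ) → ∀ c, F (updS ω k c) = F ω) →
    ∑ ω : Traj X S Y N, F ω * Zf ch src N N N ω
      = ((Fintype.card X : ℝ)⁻¹ * ((Fintype.card Y : ℝ)⁻¹ * (Fintype.card S : ℝ)⁻¹)) ^ d *
        ∑ ω : Traj X S Y N, F ω * Zf ch src a a a ω := by
  intro d
  induction d with
  | zero =>
    intro a h _ _ _
    have : a = N := by omega
    subst this
    simp
  | succ d ih =>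
    intro a h hx hy hs
    have ha : a < N := by omega
    have hk : (((⟨a, ha⟩ : Fin N).succ : Fin (N + 1)) : ℕ) = a + 1 := rfl
    have hi : ((⟨a, ha⟩ : Fin N) : ℕ) = a := rfl
    have key := step1 ch src F a ha
      (fun ω c => hx ω ⟨a, ha⟩ (by rw [hi]) c)
      (fun ω c => hy ω ⟨a, ha⟩ (by rw [hi]) c)
      (fun ω c => hs ω (⟨a, ha⟩ : Fin N).succ (by rw [hk]; omega) c)
    have ih' := ih (a + 1) (by omega)
      (fun ω i hi' c => hx ω i (by omega) c)
      (fun ω i hi' c => hy ω i (by omega) c)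
      (fun ω k hk' c => hs ω k (by omega) c)
    rw [ih', key]
    ring

private lemma phase2 (ch : NCFSC X S Y) (src : Source X S Y N u) (F : Traj X S Y N → ℝ)
    (A : ℕ) (hAN : A ≤ N) :
    ∀ (d b : ℕ), b + d = A → A ≤ b + u + 1 →
    (∀ ω (i : Fin N), b ≤ (i : ℕ) → ∀ c, F (updY ω i c) = F ω) →
    (∀ ω (k : Fin (N + 1)), b < (k : ℕ) → ∀ c, F (updS ω k c) = F ω) →
    ∑ ω : Traj X S Y N, F ω * Zf ch src A A A ω
      = ((Fintype.card Y : ℝ)⁻¹ * (Fintype.card S : ℝ)⁻¹) ^ d *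
        ∑ ω : Traj X S Y N, F ω * Zf ch src A b b ω := by
  intro d
  induction d with
  | zero =>
    intro b h _ _ _
    have : b = A := by omega
    subst this
    simp
  | succ d ih =>
    intro b h hAb hy hs
    have hb : b < N := by omega
    have hk : (((⟨b, hb⟩ : Fin N).succ : Fin (N + 1)) : ℕ) = b + 1 := rfl
    have hi : ((⟨b, hb⟩ : Fin N) : ℕ) = b := rfl
    have key := step2 ch src F A b hb hAb
      (fun ω c => hy ω ⟨b, hb⟩ (by rw [hi]) c)
      (fun ω c => hs ω (⟨b, hb⟩ : Fin N).succ (by rw [hk]; omega) c)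
    have ih' := ih (b + 1) (by omega) (by omega)
      (fun ω i hi' c => hy ω i (by omega) c)
      (fun ω k hk' c => hs ω k (by omega) c)
    rw [ih', key]
    ring

private lemma reduceZ (ch : NCFSC X S Y) (src : Source X S Y N u) (F : Traj X S Y N → ℝ)
    (a b : ℕ) (hba : b ≤ a) (haN : a ≤ N) (hab : a ≤ b + u + 1)
    (hFx : ∀ ω (i : Fin N), a ≤ (i : ℕ) → ∀ c, F (updX ω i c) = F ω)
    (hFy : ∀ ω (i : Fin N), b ≤ (i : ℕ) → ∀ c, F (updY ω i c) = F ω)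
    (hFs : ∀ ω (k : Fin (N + 1)), b < (k : ℕ) → ∀ c, F (updS ω k c) = F ω) :
    ∑ ω : Traj X S Y N, F ω * jointP ch src ω
      = ((Fintype.card X : ℝ)⁻¹ * ((Fintype.card Y : ℝ)⁻¹ * (Fintype.card S : ℝ)⁻¹)) ^ (N - a)
        * (((Fintype.card Y : ℝ)⁻¹ * (Fintype.card S : ℝ)⁻¹) ^ (a - b)
        * ∑ ω : Traj X S Y N, F ω * Zf ch src a b b ω) := by
  rw [Finset.sum_congr rfl fun ω _ => by rw [jointP_eq_Zf ch src ω]]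
  rw [phase1 ch src F (N - a) a (by omega)
    (fun ω i hi c => hFx ω i hi c)
    (fun ω i hi c => hFy ω i (by omega) c)
    (fun ω k hk c => hFs ω k (by omega) c)]
  rw [phase2 ch src F a haN (a - b) b (by omega) hab hFy hFs]

/-! ### Indicators of cylinder events -/

open scoped Classical in
private def ind (E : Set (Traj X S Y N)) (ω : Traj X S Y N) : ℝ := if ω ∈ E then 1 else 0

private lemma prE_eq_sum_ind (p : Traj X S Y N → ℝ) (E : Set (Traj X S Y N)) :
    prE p E = ∑ ω : Traj X S Y N, ind E ω * p ω := by
  unfold prE ind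
  refine Finset.sum_congr rfl fun ω _ => ?_
  rw [Set.indicator_apply]
  split_ifs <;> simp

private lemma ind_congr {E : Set (Traj X S Y N)} {ω ω' : Traj X S Y N}
    (h : ω ∈ E ↔ ω' ∈ E) : ind E ω = ind E ω' := by
  unfold ind
  by_cases hw : ω ∈ E
  · rw [if_pos hw, if_pos (h.mp hw)]
  · rw [if_neg hw, if_neg (fun hc => hw (h.mpr hc))]

private lemma ind_inv_updX {P : Fin N → Prop} {Q : Fin (N + 1) → Prop} {R : Fin N → Prop}
    (xg : Fin N → X) (sg : Fin (N + 1) → S) (yh : Fin N → Y) (i : Fin N)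
    (hP : ∀ j, P j → j ≠ i) (ω : Traj X S Y N) (c : X) :
    ind ({ω : Traj X S Y N | (∀ j, P j → ω.1 j = xg j) ∧ ∀ j, Q j → ω.2.1 j = sg j} ∩
        {ω : Traj X S Y N | ∀ j, R j → ω.2.2 j = yh j}) (updX ω i c)
      = ind ({ω : Traj X S Y N | (∀ j, P j → ω.1 j = xg j) ∧ ∀ j, Q j → ω.2.1 j = sg j} ∩
        {ω : Traj X S Y N | ∀ j, R j → ω.2.2 j = yh j}) ω := by
  have hmem : (updX ω i c ∈
      ({ω : Traj X S Y N | (∀ j, P j → ω.1 j = xg j) ∧ ∀ j, Q j → ω.2.1 j = sg j} ∩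
        {ω : Traj X S Y N | ∀ j, R j → ω.2.2 j = yh j})) ↔ (ω ∈
      ({ω : Traj X S Y N | (∀ j, P j → ω.1 j = xg j) ∧ ∀ j, Q j → ω.2.1 j = sg j} ∩
        {ω : Traj X S Y N | ∀ j, R j → ω.2.2 j = yh j})) := by
    simp only [Set.mem_inter_iff, Set.mem_setOf_eq, updX]
    constructor
    · rintro ⟨⟨h1, h2⟩, h3⟩
      exact ⟨⟨fun j hj => by rw [← h1 j hj, Function.update_of_ne (hP j hj)], h2⟩, h3⟩
    · rintro ⟨⟨h1, h2⟩, h3⟩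
      exact ⟨⟨fun j hj => by rw [Function.update_of_ne (hP j hj)]; exact h1 j hj, h2⟩, h3⟩
  exact ind_congr hmem

private lemma ind_inv_updY {P : Fin N → Prop} {Q : Fin (N + 1) → Prop} {R : Fin N → Prop}
    (xg : Fin N → X) (sg : Fin (N + 1) → S) (yh : Fin N → Y) (i : Fin N)
    (hR : ∀ j, R j → j ≠ i) (ω : Traj X S Y N) (c : Y) :
    ind ({ω : Traj X S Y N | (∀ j, P j → ω.1 j = xg j) ∧ ∀ j, Q j → ω.2.1 j = sg j} ∩
        {ω : Traj X S Y N | ∀ j, R j → ω.2.2 j = yh j}) (updY ω i c)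
      = ind ({ω : Traj X S Y N | (∀ j, P j → ω.1 j = xg j) ∧ ∀ j, Q j → ω.2.1 j = sg j} ∩
        {ω : Traj X S Y N | ∀ j, R j → ω.2.2 j = yh j}) ω := by
  have hmem : (updY ω i c ∈
      ({ω : Traj X S Y N | (∀ j, P j → ω.1 j = xg j) ∧ ∀ j, Q j → ω.2.1 j = sg j} ∩
        {ω : Traj X S Y N | ∀ j, R j → ω.2.2 j = yh j})) ↔ (ω ∈
      ({ω : Traj X S Y N | (∀ j, P j → ω.1 j = xg j) ∧ ∀ j, Q j → ω.2.1 j = sg j} ∩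
        {ω : Traj X S Y N | ∀ j, R j → ω.2.2 j = yh j})) := by
    simp only [Set.mem_inter_iff, Set.mem_setOf_eq, updY]
    constructor
    · rintro ⟨⟨h1, h2⟩, h3⟩
      exact ⟨⟨h1, h2⟩, fun j hj => by rw [← h3 j hj, Function.update_of_ne (hR j hj)]⟩
    · rintro ⟨⟨h1, h2⟩, h3⟩
      exact ⟨⟨h1, h2⟩, fun j hj => by rw [Function.update_of_ne (hR j hj)]; exact h3 j hj⟩
  exact ind_congr hmem

private lemma ind_inv_updS {P : Fin N → Prop} {Q : Fin (N + 1) → Prop} {R : Fin N → Prop}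
    (xg : Fin N → X) (sg : Fin (N + 1) → S) (yh : Fin N → Y) (k : Fin (N + 1))
    (hQ : ∀ j, Q j → j ≠ k) (ω : Traj X S Y N) (c : S) :
    ind ({ω : Traj X S Y N | (∀ j, P j → ω.1 j = xg j) ∧ ∀ j, Q j → ω.2.1 j = sg j} ∩
        {ω : Traj X S Y N | ∀ j, R j → ω.2.2 j = yh j}) (updS ω k c)
      = ind ({ω : Traj X S Y N | (∀ j, P j → ω.1 j = xg j) ∧ ∀ j, Q j → ω.2.1 j = sg j} ∩
        {ω : Traj X S Y N | ∀ j, R j → ω.2.2 j = yh j}) ω := by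
  have hmem : (updS ω k c ∈
      ({ω : Traj X S Y N | (∀ j, P j → ω.1 j = xg j) ∧ ∀ j, Q j → ω.2.1 j = sg j} ∩
        {ω : Traj X S Y N | ∀ j, R j → ω.2.2 j = yh j})) ↔ (ω ∈
      ({ω : Traj X S Y N | (∀ j, P j → ω.1 j = xg j) ∧ ∀ j, Q j → ω.2.1 j = sg j} ∩
        {ω : Traj X S Y N | ∀ j, R j → ω.2.2 j = yh j})) := by
    simp only [Set.mem_inter_iff, Set.mem_setOf_eq, updS]
    constructor
    · rintro ⟨⟨h1, h2⟩, h3⟩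
      exact ⟨⟨h1, fun j hj => by rw [← h2 j hj, Function.update_of_ne (hQ j hj)]⟩, h3⟩
    · rintro ⟨⟨h1, h2⟩, h3⟩
      exact ⟨⟨h1, fun j hj => by rw [Function.update_of_ne (hQ j hj)]; exact h2 j hj⟩, h3⟩
  exact ind_congr hmem


/-! ### The key one-step factorization -/

private lemma lemmaA (ch : NCFSC X S Y) (src : Source X S Y N u) (v : ℕ)
    (huv : u ≤ v) (hM : IsMarkov v src) (t : Fin N) (htu : u ≤ (t : ℕ))
    (yh : Fin N → Y) (xg : Fin N → X) (sg : Fin (N + 1) → S) :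
    prE (jointP ch src)
      ({ω : Traj X S Y N |
          (∀ j : Fin N, (t : ℕ) ≤ (j : ℕ) + v ∧ (j : ℕ) ≤ (t : ℕ) → ω.1 j = xg j) ∧
            ∀ j : Fin (N + 1), (t : ℕ) ≤ (j : ℕ) + v ∧ (j : ℕ) + u ≤ (t : ℕ) + 1 → ω.2.1 j = sg j} ∩
        {ω : Traj X S Y N | ∀ j : Fin N, (j : ℕ) + u ≤ (t : ℕ) → ω.2.2 j = yh j})
    = prE (jointP ch src)
      ({ω : Traj X S Y N |
          (∀ j : Fin N, (t : ℕ) ≤ (j : ℕ) + v ∧ (j : ℕ) < (t : ℕ) → ω.1 j = xg j) ∧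
            ∀ j : Fin (N + 1), (t : ℕ) ≤ (j : ℕ) + v ∧ (j : ℕ) + u ≤ (t : ℕ) → ω.2.1 j = sg j} ∩
        {ω : Traj X S Y N | ∀ j : Fin N, (j : ℕ) + u + 1 ≤ (t : ℕ) → ω.2.2 j = yh j})
      * (src.pol t xg sg yh (xg t) *
        ch.W (yh ⟨(t : ℕ) - u, by have := t.isLt; omega⟩)
          (sg ⟨(t : ℕ) + 1 - u, by have := t.isLt; omega⟩)
          (xg ⟨(t : ℕ) - u, by have := t.isLt; omega⟩)
          (sg ⟨(t : ℕ) - u, by have := t.isLt; omega⟩)) := by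
  have hN : (t : ℕ) < N := t.isLt
  have h1 : (t : ℕ) - u < N := by omega
  have h2 : (t : ℕ) - u < N + 1 := by omega
  have h3 : (t : ℕ) + 1 - u < N + 1 := by omega
  set Ee := {ω : Traj X S Y N |
      (∀ j : Fin N, (t : ℕ) ≤ (j : ℕ) + v ∧ (j : ℕ) ≤ (t : ℕ) → ω.1 j = xg j) ∧
        ∀ j : Fin (N + 1), (t : ℕ) ≤ (j : ℕ) + v ∧ (j : ℕ) + u ≤ (t : ℕ) + 1 → ω.2.1 j = sg j}
    with hEe
  set Fe := {ω : Traj X S Y N | ∀ j : Fin N, (j : ℕ) + u ≤ (t : ℕ) → ω.2.2 j = yh j} with hFe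
  set Ee' := {ω : Traj X S Y N |
      (∀ j : Fin N, (t : ℕ) ≤ (j : ℕ) + v ∧ (j : ℕ) < (t : ℕ) → ω.1 j = xg j) ∧
        ∀ j : Fin (N + 1), (t : ℕ) ≤ (j : ℕ) + v ∧ (j : ℕ) + u ≤ (t : ℕ) → ω.2.1 j = sg j}
    with hEe'
  set Fe' := {ω : Traj X S Y N | ∀ j : Fin N, (j : ℕ) + u + 1 ≤ (t : ℕ) → ω.2.2 j = yh j}
    with hFe'
  set K : ℝ := src.pol t xg sg yh (xg t) *
    ch.W (yh ⟨(t : ℕ) - u, by have := t.isLt; omega⟩)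
      (sg ⟨(t : ℕ) + 1 - u, by have := t.isLt; omega⟩)
      (xg ⟨(t : ℕ) - u, by have := t.isLt; omega⟩)
      (sg ⟨(t : ℕ) - u, by have := t.isLt; omega⟩) with hK
  set T : ℝ := ∑ ω : Traj X S Y N,
    ind (Ee' ∩ Fe') ω * Zf ch src (t : ℕ) ((t : ℕ) - u) ((t : ℕ) - u) ω with hT
  -- invariance of the indicator of `Ee ∩ Fe`
  have hIxEF : ∀ ω (i : Fin N), (t : ℕ) + 1 ≤ (i : ℕ) → ∀ c,
      ind (Ee ∩ Fe) (updX ω i c) = ind (Ee ∩ Fe) ω := by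
    intro ω i hi c
    rw [hEe, hFe]
    exact ind_inv_updX xg sg yh i (fun j hj => Fin.ne_of_val_ne (by omega)) ω c
  have hIyEF : ∀ ω (i : Fin N), (t : ℕ) - u + 1 ≤ (i : ℕ) → ∀ c,
      ind (Ee ∩ Fe) (updY ω i c) = ind (Ee ∩ Fe) ω := by
    intro ω i hi c
    rw [hEe, hFe]
    exact ind_inv_updY xg sg yh i (fun j hj => Fin.ne_of_val_ne (by omega)) ω c
  have hIsEF : ∀ ω (k : Fin (N + 1)), (t : ℕ) - u + 1 < (k : ℕ) → ∀ c,
      ind (Ee ∩ Fe) (updS ω k c) = ind (Ee ∩ Fe) ω := by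
    intro ω k hk c
    rw [hEe, hFe]
    exact ind_inv_updS xg sg yh k (fun j hj => Fin.ne_of_val_ne (by omega)) ω c
  -- invariance of the indicator of `Ee' ∩ Fe'`
  have hIxEF' : ∀ ω (i : Fin N), (t : ℕ) ≤ (i : ℕ) → ∀ c,
      ind (Ee' ∩ Fe') (updX ω i c) = ind (Ee' ∩ Fe') ω := by
    intro ω i hi c
    rw [hEe', hFe']
    exact ind_inv_updX xg sg yh i (fun j hj => Fin.ne_of_val_ne (by omega)) ω c
  have hIyEF' : ∀ ω (i : Fin N), (t : ℕ) - u ≤ (i : ℕ) → ∀ c,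
      ind (Ee' ∩ Fe') (updY ω i c) = ind (Ee' ∩ Fe') ω := by
    intro ω i hi c
    rw [hEe', hFe']
    exact ind_inv_updY xg sg yh i (fun j hj => Fin.ne_of_val_ne (by omega)) ω c
  have hIsEF' : ∀ ω (k : Fin (N + 1)), (t : ℕ) - u < (k : ℕ) → ∀ c,
      ind (Ee' ∩ Fe') (updS ω k c) = ind (Ee' ∩ Fe') ω := by
    intro ω k hk c
    rw [hEe', hFe']
    exact ind_inv_updS xg sg yh k (fun j hj => Fin.ne_of_val_ne (by omega)) ω c
  -- expansions via the reduction
  have expandEF : prE (jointP ch src) (Ee ∩ Fe)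
      = ((Fintype.card X : ℝ)⁻¹ * ((Fintype.card Y : ℝ)⁻¹ * (Fintype.card S : ℝ)⁻¹))
          ^ (N - ((t : ℕ) + 1)) *
        (((Fintype.card Y : ℝ)⁻¹ * (Fintype.card S : ℝ)⁻¹)
            ^ (((t : ℕ) + 1) - ((t : ℕ) - u + 1)) *
          ∑ ω : Traj X S Y N, ind (Ee ∩ Fe) ω *
            Zf ch src ((t : ℕ) + 1) ((t : ℕ) - u + 1) ((t : ℕ) - u + 1) ω) := by
    rw [prE_eq_sum_ind]
    exact reduceZ ch src _ ((t : ℕ) + 1) ((t : ℕ) - u + 1) (by omega) (by omega) (by omega)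
      hIxEF hIyEF hIsEF
  have expandEF' : prE (jointP ch src) (Ee' ∩ Fe')
      = ((Fintype.card X : ℝ)⁻¹ * ((Fintype.card Y : ℝ)⁻¹ * (Fintype.card S : ℝ)⁻¹))
          ^ (N - (t : ℕ)) *
        (((Fintype.card Y : ℝ)⁻¹ * (Fintype.card S : ℝ)⁻¹) ^ ((t : ℕ) - ((t : ℕ) - u)) * T) := by
    rw [prE_eq_sum_ind, hT]
    exact reduceZ ch src _ (t : ℕ) ((t : ℕ) - u) (by omega) (by omega) (by omega)
      hIxEF' hIyEF' hIsEF'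
  -- splitting off the last factors of `Zf`
  have hZsp : ∀ ω : Traj X S Y N,
      ind (Ee ∩ Fe) ω * Zf ch src ((t : ℕ) + 1) ((t : ℕ) - u + 1) ((t : ℕ) - u + 1) ω
        = (ind (Ee ∩ Fe) ω *
            (polF src t ω * (PFf ch ⟨(t : ℕ) - u, h1⟩ ω * QFf ch ⟨(t : ℕ) - u, h1⟩ ω))) *
          Zf ch src (t : ℕ) ((t : ℕ) - u) ((t : ℕ) - u) ω := by
    intro ω
    unfold Zf
    rw [prod_if_succ hN (fun i => polF src i ω), prod_if_succ h1 (fun i => PFf ch i ω),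
      prod_if_succ h1 (fun i => QFf ch i ω)]
    simp only [Fin.eta]
    ring
  -- the factors are constant on the event
  have hconst : ∀ ω : Traj X S Y N,
      ind (Ee ∩ Fe) ω *
          (polF src t ω * (PFf ch ⟨(t : ℕ) - u, h1⟩ ω * QFf ch ⟨(t : ℕ) - u, h1⟩ ω))
        = ind (Ee ∩ Fe) ω * K := by
    intro ω
    unfold ind
    split_ifs with hmem
    · obtain ⟨hE1, hF1⟩ := hmem
      rw [hEe] at hE1
      rw [hFe] at hF1
      obtain ⟨hx1, hs1⟩ := hE1
      have hy1 : ∀ j : Fin N, (j : ℕ) + u ≤ (t : ℕ) → ω.2.2 j = yh j := hF1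
      have hpol : polF src t ω = src.pol t xg sg yh (xg t) := by
        unfold polF
        rw [hM t ω.1 xg ω.2.1 sg ω.2.2 yh
          (fun j hj => hx1 j ⟨hj.1, by omega⟩)
          (fun j hj => hs1 j ⟨hj.1, by omega⟩)
          (fun j hj => hy1 j (by omega)),
          hx1 t ⟨by omega, le_refl _⟩]
      have hPf : PFf ch ⟨(t : ℕ) - u, h1⟩ ω
          = ch.P (yh ⟨(t : ℕ) - u, h1⟩) (xg ⟨(t : ℕ) - u, h1⟩) (sg ⟨(t : ℕ) - u, h2⟩) := by
        unfold PFf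
        rw [hy1 ⟨(t : ℕ) - u, h1⟩ (by show (t : ℕ) - u + u ≤ (t : ℕ); omega),
          hx1 ⟨(t : ℕ) - u, h1⟩ ⟨by show (t : ℕ) ≤ (t : ℕ) - u + v; omega,
            by show (t : ℕ) - u ≤ (t : ℕ); omega⟩,
          hs1 (⟨(t : ℕ) - u, h1⟩ : Fin N).castSucc
            ⟨by show (t : ℕ) ≤ (t : ℕ) - u + v; omega,
              by show (t : ℕ) - u + u ≤ (t : ℕ) + 1; omega⟩]
        rfl
      have hQf : QFf ch ⟨(t : ℕ) - u, h1⟩ ω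
          = ch.Q (sg ⟨(t : ℕ) + 1 - u, h3⟩) (sg ⟨(t : ℕ) - u, h2⟩) := by
        unfold QFf
        rw [hs1 (⟨(t : ℕ) - u, h1⟩ : Fin N).succ
            ⟨by show (t : ℕ) ≤ (t : ℕ) - u + 1 + v; omega,
              by show (t : ℕ) - u + 1 + u ≤ (t : ℕ) + 1; omega⟩,
          hs1 (⟨(t : ℕ) - u, h1⟩ : Fin N).castSucc
            ⟨by show (t : ℕ) ≤ (t : ℕ) - u + v; omega,
              by show (t : ℕ) - u + u ≤ (t : ℕ) + 1; omega⟩]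
        have hsu : (⟨(t : ℕ) - u, h1⟩ : Fin N).succ = (⟨(t : ℕ) + 1 - u, h3⟩ : Fin (N + 1)) :=
          Fin.ext (by show (t : ℕ) - u + 1 = (t : ℕ) + 1 - u; omega)
        rw [hsu]
        rfl
      rw [hpol, hPf, hQf, hK]
      show _ = 1 * (src.pol t xg sg yh (xg t) * ch.W _ _ _ _)
      unfold NCFSC.W
      ring
    · ring
  -- decomposition of the indicator
  have hiff : ∀ ω : Traj X S Y N, ω ∈ Ee ∩ Fe ↔
      (ω ∈ Ee' ∩ Fe' ∧ ω.1 t = xg t ∧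
        ω.2.2 ⟨(t : ℕ) - u, h1⟩ = yh ⟨(t : ℕ) - u, h1⟩ ∧
        ω.2.1 ⟨(t : ℕ) + 1 - u, h3⟩ = sg ⟨(t : ℕ) + 1 - u, h3⟩) := by
    intro ω
    simp only [hEe, hFe, hEe', hFe', Set.mem_inter_iff, Set.mem_setOf_eq]
    constructor
    · rintro ⟨⟨hx1, hs1⟩, hy1⟩
      refine ⟨⟨⟨fun j hj => hx1 j ⟨hj.1, by omega⟩, fun j hj => hs1 j ⟨hj.1, by omega⟩⟩,
        fun j hj => hy1 j (by omega)⟩,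
        hx1 t ⟨by omega, le_refl _⟩,
        hy1 ⟨(t : ℕ) - u, h1⟩ (by show (t : ℕ) - u + u ≤ (t : ℕ); omega),
        hs1 ⟨(t : ℕ) + 1 - u, h3⟩ ⟨by show (t : ℕ) ≤ (t : ℕ) + 1 - u + v; omega,
          by show (t : ℕ) + 1 - u + u ≤ (t : ℕ) + 1; omega⟩⟩
    · rintro ⟨⟨⟨hx1, hs1⟩, hy1⟩, hxt, hyt, hst⟩
      refine ⟨⟨fun j hj => ?_, fun j hj => ?_⟩, fun j hj => ?_⟩
      · rcases Nat.lt_or_ge (j : ℕ) (t : ℕ) with hlt | hge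
        · exact hx1 j ⟨hj.1, hlt⟩
        · have : j = t := Fin.ext (by omega)
          rw [this]
          exact hxt
      · by_cases hle : (j : ℕ) + u ≤ (t : ℕ)
        · exact hs1 j ⟨hj.1, hle⟩
        · have : j = ⟨(t : ℕ) + 1 - u, h3⟩ := Fin.ext (by show (j : ℕ) = (t : ℕ) + 1 - u; omega)
          rw [this]
          exact hst
      · by_cases hle : (j : ℕ) + u + 1 ≤ (t : ℕ)
        · exact hy1 j hle
        · have : j = ⟨(t : ℕ) - u, h1⟩ := Fin.ext (by show (j : ℕ) = (t : ℕ) - u; omega)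
          rw [this]
          exact hyt
  have hdec : ∀ ω : Traj X S Y N, ind (Ee ∩ Fe) ω
      = ((ind (Ee' ∩ Fe') ω * ind {ω : Traj X S Y N | ω.1 t = xg t} ω) *
          ind {ω : Traj X S Y N | ω.2.2 ⟨(t : ℕ) - u, h1⟩ = yh ⟨(t : ℕ) - u, h1⟩} ω) *
          ind {ω : Traj X S Y N | ω.2.1 ⟨(t : ℕ) + 1 - u, h3⟩ = sg ⟨(t : ℕ) + 1 - u, h3⟩} ω := by
    intro ω
    unfold ind
    simp only [Set.mem_setOf_eq]
    by_cases hmem : ω ∈ Ee ∩ Fe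
    · have h' := (hiff ω).mp hmem
      rw [if_pos hmem, if_pos h'.1, if_pos h'.2.1, if_pos h'.2.2.1, if_pos h'.2.2.2]
      norm_num
    · rw [if_neg hmem]
      by_cases c1 : ω ∈ Ee' ∩ Fe'
      · by_cases c2 : ω.1 t = xg t
        · by_cases c3 : ω.2.2 ⟨(t : ℕ) - u, h1⟩ = yh ⟨(t : ℕ) - u, h1⟩
          · by_cases c4 : ω.2.1 ⟨(t : ℕ) + 1 - u, h3⟩ = sg ⟨(t : ℕ) + 1 - u, h3⟩
            · exact absurd ((hiff ω).mpr ⟨c1, c2, c3, c4⟩) hmem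
            · rw [if_neg c4]; ring
          · rw [if_neg c3]; ring
        · rw [if_neg c2]; ring
      · rw [if_neg c1]; ring
  -- marginalizing out the three point indicators
  have hG0 : ∀ ω : Traj X S Y N, (∑ c : S,
      ind {ω : Traj X S Y N | ω.2.1 ⟨(t : ℕ) + 1 - u, h3⟩ = sg ⟨(t : ℕ) + 1 - u, h3⟩}
        (updS ω ⟨(t : ℕ) + 1 - u, h3⟩ c)) = 1 := by
    intro ω
    unfold ind
    simp only [updS, Set.mem_setOf_eq, Function.update_self]
    rw [Finset.sum_ite_eq' Finset.univ (sg ⟨(t : ℕ) + 1 - u, h3⟩) (fun _ => (1 : ℝ))]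
    simp
  have hG1 : ∀ ω : Traj X S Y N, (∑ c : Y,
      ind {ω : Traj X S Y N | ω.2.2 ⟨(t : ℕ) - u, h1⟩ = yh ⟨(t : ℕ) - u, h1⟩}
        (updY ω ⟨(t : ℕ) - u, h1⟩ c)) = 1 := by
    intro ω
    unfold ind
    simp only [updY, Set.mem_setOf_eq, Function.update_self]
    rw [Finset.sum_ite_eq' Finset.univ (yh ⟨(t : ℕ) - u, h1⟩) (fun _ => (1 : ℝ))]
    simp
  have hG2 : ∀ ω : Traj X S Y N, (∑ c : X,
      ind {ω : Traj X S Y N | ω.1 t = xg t} (updX ω t c)) = 1 := by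
    intro ω
    unfold ind
    simp only [updX, Set.mem_setOf_eq, Function.update_self]
    rw [Finset.sum_ite_eq' Finset.univ (xg t) (fun _ => (1 : ℝ))]
    simp
  have hFs0 : ∀ (ω : Traj X S Y N) (c : S),
      ind (Ee' ∩ Fe') (updS ω ⟨(t : ℕ) + 1 - u, h3⟩ c) *
          Zf ch src (t : ℕ) ((t : ℕ) - u) ((t : ℕ) - u) (updS ω ⟨(t : ℕ) + 1 - u, h3⟩ c) *
          ind {ω : Traj X S Y N | ω.1 t = xg t} (updS ω ⟨(t : ℕ) + 1 - u, h3⟩ c) *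
          ind {ω : Traj X S Y N | ω.2.2 ⟨(t : ℕ) - u, h1⟩ = yh ⟨(t : ℕ) - u, h1⟩}
            (updS ω ⟨(t : ℕ) + 1 - u, h3⟩ c)
        = ind (Ee' ∩ Fe') ω * Zf ch src (t : ℕ) ((t : ℕ) - u) ((t : ℕ) - u) ω *
            ind {ω : Traj X S Y N | ω.1 t = xg t} ω *
            ind {ω : Traj X S Y N | ω.2.2 ⟨(t : ℕ) - u, h1⟩ = yh ⟨(t : ℕ) - u, h1⟩} ω := by
    intro ω c
    rw [hIsEF' ω ⟨(t : ℕ) + 1 - u, h3⟩ (by show (t : ℕ) - u < (t : ℕ) + 1 - u; omega) c,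
      Zf_updS ch src _ _ _ ⟨(t : ℕ) + 1 - u, h3⟩ (by show (t : ℕ) + 1 - u ≠ 0; omega)
        (by show (t : ℕ) ≤ (t : ℕ) + 1 - u + u; omega)
        (by show (t : ℕ) - u ≤ (t : ℕ) + 1 - u; omega)
        (by show (t : ℕ) - u < (t : ℕ) + 1 - u; omega) ω c]
    rfl
  have hFs1 : ∀ (ω : Traj X S Y N) (c : Y),
      ind (Ee' ∩ Fe') (updY ω ⟨(t : ℕ) - u, h1⟩ c) *
          Zf ch src (t : ℕ) ((t : ℕ) - u) ((t : ℕ) - u) (updY ω ⟨(t : ℕ) - u, h1⟩ c) *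
          ind {ω : Traj X S Y N | ω.1 t = xg t} (updY ω ⟨(t : ℕ) - u, h1⟩ c)
        = ind (Ee' ∩ Fe') ω * Zf ch src (t : ℕ) ((t : ℕ) - u) ((t : ℕ) - u) ω *
            ind {ω : Traj X S Y N | ω.1 t = xg t} ω := by
    intro ω c
    rw [hIyEF' ω ⟨(t : ℕ) - u, h1⟩ (by show (t : ℕ) - u ≤ (t : ℕ) - u; omega) c,
      Zf_updY ch src _ _ _ ⟨(t : ℕ) - u, h1⟩ (by show (t : ℕ) ≤ (t : ℕ) - u + u + 1; omega)
        (by show (t : ℕ) - u ≤ (t : ℕ) - u; omega) ω c]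
    rfl
  have hFs2 : ∀ (ω : Traj X S Y N) (c : X),
      ind (Ee' ∩ Fe') (updX ω t c) *
          Zf ch src (t : ℕ) ((t : ℕ) - u) ((t : ℕ) - u) (updX ω t c)
        = ind (Ee' ∩ Fe') ω * Zf ch src (t : ℕ) ((t : ℕ) - u) ((t : ℕ) - u) ω := by
    intro ω c
    rw [hIxEF' ω t (le_refl _) c,
      Zf_updX ch src _ _ _ t (le_refl _) (by omega) ω c]
  have main : (∑ ω : Traj X S Y N, ind (Ee ∩ Fe) ω *
        Zf ch src ((t : ℕ) + 1) ((t : ℕ) - u + 1) ((t : ℕ) - u + 1) ω)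
      = K * ((Fintype.card S : ℝ)⁻¹ * ((Fintype.card Y : ℝ)⁻¹ *
          ((Fintype.card X : ℝ)⁻¹ * T))) := by
    calc (∑ ω : Traj X S Y N, ind (Ee ∩ Fe) ω *
          Zf ch src ((t : ℕ) + 1) ((t : ℕ) - u + 1) ((t : ℕ) - u + 1) ω)
        = ∑ ω : Traj X S Y N, (ind (Ee ∩ Fe) ω *
            (polF src t ω * (PFf ch ⟨(t : ℕ) - u, h1⟩ ω * QFf ch ⟨(t : ℕ) - u, h1⟩ ω))) *
            Zf ch src (t : ℕ) ((t : ℕ) - u) ((t : ℕ) - u) ω :=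
          Finset.sum_congr rfl fun ω _ => hZsp ω
      _ = ∑ ω : Traj X S Y N, (ind (Ee ∩ Fe) ω * K) *
            Zf ch src (t : ℕ) ((t : ℕ) - u) ((t : ℕ) - u) ω :=
          Finset.sum_congr rfl fun ω _ => by rw [hconst ω]
      _ = K * ∑ ω : Traj X S Y N, ind (Ee ∩ Fe) ω *
            Zf ch src (t : ℕ) ((t : ℕ) - u) ((t : ℕ) - u) ω := by
          rw [Finset.mul_sum]
          exact Finset.sum_congr rfl fun ω _ => by ring
      _ = K * ∑ ω : Traj X S Y N,
            (ind (Ee' ∩ Fe') ω * Zf ch src (t : ℕ) ((t : ℕ) - u) ((t : ℕ) - u) ω *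
              ind {ω : Traj X S Y N | ω.1 t = xg t} ω *
              ind {ω : Traj X S Y N | ω.2.2 ⟨(t : ℕ) - u, h1⟩ = yh ⟨(t : ℕ) - u, h1⟩} ω) *
            ind {ω : Traj X S Y N |
              ω.2.1 ⟨(t : ℕ) + 1 - u, h3⟩ = sg ⟨(t : ℕ) + 1 - u, h3⟩} ω := by
          refine congrArg _ (Finset.sum_congr rfl fun ω _ => ?_)
          rw [hdec ω]
          ring
      _ = K * ((Fintype.card S : ℝ)⁻¹ * ∑ ω : Traj X S Y N,
            ind (Ee' ∩ Fe') ω * Zf ch src (t : ℕ) ((t : ℕ) - u) ((t : ℕ) - u) ω *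
              ind {ω : Traj X S Y N | ω.1 t = xg t} ω *
              ind {ω : Traj X S Y N | ω.2.2 ⟨(t : ℕ) - u, h1⟩ = yh ⟨(t : ℕ) - u, h1⟩} ω) :=
          congrArg _ (margS ⟨(t : ℕ) + 1 - u, h3⟩ _ _ hFs0 hG0)
      _ = K * ((Fintype.card S : ℝ)⁻¹ * ((Fintype.card Y : ℝ)⁻¹ * ∑ ω : Traj X S Y N,
            ind (Ee' ∩ Fe') ω * Zf ch src (t : ℕ) ((t : ℕ) - u) ((t : ℕ) - u) ω *
              ind {ω : Traj X S Y N | ω.1 t = xg t} ω)) :=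
          congrArg _ (congrArg _ (margY ⟨(t : ℕ) - u, h1⟩ _ _ hFs1 hG1))
      _ = K * ((Fintype.card S : ℝ)⁻¹ * ((Fintype.card Y : ℝ)⁻¹ *
            ((Fintype.card X : ℝ)⁻¹ * T))) := by
          rw [hT]
          exact congrArg _ (congrArg _ (congrArg _ (margX t _ _ hFs2 hG2)))
  rw [expandEF, expandEF', main]
  rw [show N - (t : ℕ) = (N - ((t : ℕ) + 1)) + 1 from by omega,
    show (t : ℕ) - ((t : ℕ) - u) = ((t : ℕ) + 1) - ((t : ℕ) - u + 1) from by omega]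
  rw [pow_succ]
  ring

/-! ### Final assembly helpers -/

private lemma jointP_nonneg (ch : NCFSC X S Y) (src : Source X S Y N u) (ω : Traj X S Y N) :
    0 ≤ jointP ch src ω := by
  unfold jointP NCFSC.W
  exact mul_nonneg (ch.init_nonneg _) (Finset.prod_nonneg fun i _ =>
    mul_nonneg (src.nonneg _ _ _ _ _) (mul_nonneg (ch.P_nonneg _ _ _) (ch.Q_nonneg _ _)))

private lemma prE_mono (p : Traj X S Y N → ℝ) (hp : ∀ ω, 0 ≤ p ω)
    {E F : Set (Traj X S Y N)} (h : E ⊆ F) : prE p E ≤ prE p F :=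
  Finset.sum_le_sum fun ω _ => Set.indicator_le_indicator_of_subset h hp ω

end BCJRAux

set_option maxHeartbeats 2000000

/-- **BCJR forward recursion for the a posteriori vector.**
For a non-controllable FSC with a source in `𝒫_v(u,u)` (`0 ≤ u ≤ v`), a
time `t` with `1 ≤ t - u` (0-based: `u ≤ (t:ℕ)`), and an output history
`y^{t-u}` of positive probability,
`α_t(x_{t-v+1}^t, s_{t-v}^{t-u})
  = ( Σ_{x_{t-v}, s_{t-v-1}} β ) / ( Σ_{x_{t-v}^t, s_{t-v-1}^{t-u}} β )`.
The numerator sums `β` over `x_{t-v} ∈ 𝒳`, `s_{t-v-1} ∈ 𝒮` (when `t > v`;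
for `t ≤ v` these variables are truncated away), and the denominator sums
`β` over all values of the whole windows `x_{t-v}^t` and `s_{t-v-1}^{t-u}`
(realized by summing over full functions constrained to agree with
`(xf, sf)` off these windows). -/
theorem statement8 {X S Y : Type} [Fintype X] [Fintype S] [Fintype Y] {N u : ℕ}
    (ch : NCFSC X S Y) (src : Source X S Y N u) (v : ℕ) (huv : u ≤ v)
    (hM : IsMarkov v src)
    (t : Fin N) (htu : u ≤ (t : ℕ)) (yh : Fin N → Y)
    (hpos : 0 < prE (jointP ch src)
      {ω : Traj X S Y N | ∀ j : Fin N, (j : ℕ) + u ≤ (t : ℕ) → ω.2.2 j = yh j})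
    (xf : Fin N → X) (sf : Fin (N + 1) → S) :
    condPr (jointP ch src)
        {ω : Traj X S Y N |
          (∀ j : Fin N, (t : ℕ) + 1 ≤ (j : ℕ) + v ∧ (j : ℕ) ≤ (t : ℕ) → ω.1 j = xf j) ∧
            ∀ j : Fin (N + 1),
              (t : ℕ) + 1 ≤ (j : ℕ) + v ∧ (j : ℕ) + u ≤ (t : ℕ) + 1 → ω.2.1 j = sf j}
        {ω : Traj X S Y N | ∀ j : Fin N, (j : ℕ) + u ≤ (t : ℕ) → ω.2.2 j = yh j} =
      (if v ≤ (t : ℕ) then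
          ∑ a : X, ∑ b : S,
            bcjrTerm v ch src t yh
              (Function.update xf ⟨(t : ℕ) - v, by have := t.isLt; omega⟩ a)
              (Function.update sf ⟨(t : ℕ) - v, by have := t.isLt; omega⟩ b)
        else bcjrTerm v ch src t yh xf sf) /
        (∑ xg : Fin N → X, ∑ sg : Fin (N + 1) → S,
          if (∀ j : Fin N, ¬((t : ℕ) ≤ (j : ℕ) + v ∧ (j : ℕ) ≤ (t : ℕ)) → xg j = xf j) ∧
              (∀ j : Fin (N + 1),
                ¬((t : ℕ) ≤ (j : ℕ) + v ∧ (j : ℕ) + u ≤ (t : ℕ) + 1) → sg j = sf j) then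
            bcjrTerm v ch src t yh xg sg
          else 0) := by
  have hN : (t : ℕ) < N := t.isLt
  have h4 : (t : ℕ) - v < N := by omega
  have h5 : (t : ℕ) - v < N + 1 := by omega
  have hFsub : ({ω : Traj X S Y N | ∀ j : Fin N, (j : ℕ) + u ≤ (t : ℕ) → ω.2.2 j = yh j} : Set (Traj X S Y N)) ⊆ {ω : Traj X S Y N | ∀ j : Fin N, (j : ℕ) + u + 1 ≤ (t : ℕ) → ω.2.2 j = yh j} :=
    fun ω h j hj => h j (by omega)
  have hFppos : 0 < prE (jointP ch src) ({ω : Traj X S Y N | ∀ j : Fin N, (j : ℕ) + u + 1 ≤ (t : ℕ) → ω.2.2 j = yh j} : Set (Traj X S Y N)) :=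
    lt_of_lt_of_le hpos (prE_mono _ (jointP_nonneg ch src) hFsub)
  have hFne : prE (jointP ch src) ({ω : Traj X S Y N | ∀ j : Fin N, (j : ℕ) + u + 1 ≤ (t : ℕ) → ω.2.2 j = yh j} : Set (Traj X S Y N)) ≠ 0 := ne_of_gt hFppos
  have hbeta : ∀ (xg : Fin N → X) (sg : Fin (N + 1) → S),
      prE (jointP ch src) (({ω : Traj X S Y N | (∀ j : Fin N, (t : ℕ) ≤ (j : ℕ) + v ∧ (j : ℕ) ≤ (t : ℕ) → ω.1 j = xg j) ∧ ∀ j : Fin (N + 1), (t : ℕ) ≤ (j : ℕ) + v ∧ (j : ℕ) + u ≤ (t : ℕ) + 1 → ω.2.1 j = sg j} : Set (Traj X S Y N)) ∩ {ω : Traj X S Y N | ∀ j : Fin N, (j : ℕ) + u ≤ (t : ℕ) → ω.2.2 j = yh j})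
        = prE (jointP ch src) ({ω : Traj X S Y N | ∀ j : Fin N, (j : ℕ) + u + 1 ≤ (t : ℕ) → ω.2.2 j = yh j} : Set (Traj X S Y N))
          * bcjrTerm v ch src t yh xg sg := by
    intro xg sg
    rw [lemmaA ch src v huv hM t htu yh xg sg]
    unfold bcjrTerm condPr
    field_simp
  have hnum : prE (jointP ch src) (({ω : Traj X S Y N | (∀ j : Fin N, (t : ℕ) + 1 ≤ (j : ℕ) + v ∧ (j : ℕ) ≤ (t : ℕ) → ω.1 j = xf j) ∧ ∀ j : Fin (N + 1), (t : ℕ) + 1 ≤ (j : ℕ) + v ∧ (j : ℕ) + u ≤ (t : ℕ) + 1 → ω.2.1 j = sf j} : Set (Traj X S Y N)) ∩ {ω : Traj X S Y N | ∀ j : Fin N, (j : ℕ) + u ≤ (t : ℕ) → ω.2.2 j = yh j})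
      = prE (jointP ch src) ({ω : Traj X S Y N | ∀ j : Fin N, (j : ℕ) + u + 1 ≤ (t : ℕ) → ω.2.2 j = yh j} : Set (Traj X S Y N)) *
        (if v ≤ (t : ℕ) then
            ∑ a : X, ∑ b : S,
              bcjrTerm v ch src t yh
                (Function.update xf ⟨(t : ℕ) - v, by have := t.isLt; omega⟩ a)
                (Function.update sf ⟨(t : ℕ) - v, by have := t.isLt; omega⟩ b)
          else bcjrTerm v ch src t yh xf sf) := by
    by_cases hvt : v ≤ (t : ℕ)
    · rw [if_pos hvt]
      have hiffN : ∀ (a : X) (b : S) (ω : Traj X S Y N),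
          ω ∈ (({ω : Traj X S Y N | (∀ j : Fin N, (t : ℕ) ≤ (j : ℕ) + v ∧ (j : ℕ) ≤ (t : ℕ) → ω.1 j = (Function.update xf ⟨(t : ℕ) - v, by have := t.isLt; omega⟩ a) j) ∧ ∀ j : Fin (N + 1), (t : ℕ) ≤ (j : ℕ) + v ∧ (j : ℕ) + u ≤ (t : ℕ) + 1 → ω.2.1 j = (Function.update sf ⟨(t : ℕ) - v, by have := t.isLt; omega⟩ b) j} : Set (Traj X S Y N)) ∩ {ω : Traj X S Y N | ∀ j : Fin N, (j : ℕ) + u ≤ (t : ℕ) → ω.2.2 j = yh j}) ↔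
            (ω ∈ (({ω : Traj X S Y N | (∀ j : Fin N, (t : ℕ) + 1 ≤ (j : ℕ) + v ∧ (j : ℕ) ≤ (t : ℕ) → ω.1 j = xf j) ∧ ∀ j : Fin (N + 1), (t : ℕ) + 1 ≤ (j : ℕ) + v ∧ (j : ℕ) + u ≤ (t : ℕ) + 1 → ω.2.1 j = sf j} : Set (Traj X S Y N)) ∩ {ω : Traj X S Y N | ∀ j : Fin N, (j : ℕ) + u ≤ (t : ℕ) → ω.2.2 j = yh j}) ∧
              ω.1 ⟨(t : ℕ) - v, h4⟩ = a ∧ ω.2.1 ⟨(t : ℕ) - v, h5⟩ = b) := by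
        intro a b ω
        simp only [Set.mem_inter_iff, Set.mem_setOf_eq]
        constructor
        · rintro ⟨⟨hx, hs⟩, hy⟩
          refine ⟨⟨⟨fun j hj => ?_, fun j hj => ?_⟩, hy⟩, ?_, ?_⟩
          · exact (hx j ⟨by omega, hj.2⟩).trans
              (Function.update_of_ne
                (Fin.ne_of_val_ne (show (j : ℕ) ≠ (t : ℕ) - v by omega)) a xf)
          · exact (hs j ⟨by omega, hj.2⟩).trans
              (Function.update_of_ne
                (Fin.ne_of_val_ne (show (j : ℕ) ≠ (t : ℕ) - v by omega)) b sf)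
          · exact (hx ⟨(t : ℕ) - v, h4⟩ ⟨by show (t : ℕ) ≤ (t : ℕ) - v + v; omega,
              by show (t : ℕ) - v ≤ (t : ℕ); omega⟩).trans
              (Function.update_self (⟨(t : ℕ) - v, h4⟩ : Fin N) a xf)
          · exact (hs ⟨(t : ℕ) - v, h5⟩ ⟨by show (t : ℕ) ≤ (t : ℕ) - v + v; omega,
              by show (t : ℕ) - v + u ≤ (t : ℕ) + 1; omega⟩).trans
              (Function.update_self (⟨(t : ℕ) - v, h5⟩ : Fin (N + 1)) b sf)
        · rintro ⟨⟨⟨hx, hs⟩, hy⟩, ha, hb⟩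
          refine ⟨⟨fun j hj => ?_, fun j hj => ?_⟩, hy⟩
          · by_cases hj1 : (t : ℕ) + 1 ≤ (j : ℕ) + v
            · exact (hx j ⟨hj1, hj.2⟩).trans
                (Function.update_of_ne
                  (Fin.ne_of_val_ne (show (j : ℕ) ≠ (t : ℕ) - v by omega)) a xf).symm
            · have hje : j = ⟨(t : ℕ) - v, h4⟩ := Fin.ext (by show (j : ℕ) = (t : ℕ) - v; omega)
              rw [hje]
              exact ha.trans (Function.update_self (⟨(t : ℕ) - v, h4⟩ : Fin N) a xf).symm
          · by_cases hj1 : (t : ℕ) + 1 ≤ (j : ℕ) + v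
            · exact (hs j ⟨hj1, hj.2⟩).trans
                (Function.update_of_ne
                  (Fin.ne_of_val_ne (show (j : ℕ) ≠ (t : ℕ) - v by omega)) b sf).symm
            · have hje : j = ⟨(t : ℕ) - v, h5⟩ := Fin.ext (by show (j : ℕ) = (t : ℕ) - v; omega)
              rw [hje]
              exact hb.trans (Function.update_self (⟨(t : ℕ) - v, h5⟩ : Fin (N + 1)) b sf).symm
      have hsum1 : ∀ ω : Traj X S Y N,
          (∑ a : X, ∑ b : S, ind (({ω : Traj X S Y N | (∀ j : Fin N, (t : ℕ) ≤ (j : ℕ) + v ∧ (j : ℕ) ≤ (t : ℕ) → ω.1 j = (Function.update xf ⟨(t : ℕ) - v, by have := t.isLt; omega⟩ a) j) ∧ ∀ j : Fin (N + 1), (t : ℕ) ≤ (j : ℕ) + v ∧ (j : ℕ) + u ≤ (t : ℕ) + 1 → ω.2.1 j = (Function.update sf ⟨(t : ℕ) - v, by have := t.isLt; omega⟩ b) j} : Set (Traj X S Y N)) ∩ {ω : Traj X S Y N | ∀ j : Fin N, (j : ℕ) + u ≤ (t : ℕ) → ω.2.2 j = yh j}) ω)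
            = ind (({ω : Traj X S Y N | (∀ j : Fin N, (t : ℕ) + 1 ≤ (j : ℕ) + v ∧ (j : ℕ) ≤ (t : ℕ) → ω.1 j = xf j) ∧ ∀ j : Fin (N + 1), (t : ℕ) + 1 ≤ (j : ℕ) + v ∧ (j : ℕ) + u ≤ (t : ℕ) + 1 → ω.2.1 j = sf j} : Set (Traj X S Y N)) ∩ {ω : Traj X S Y N | ∀ j : Fin N, (j : ℕ) + u ≤ (t : ℕ) → ω.2.2 j = yh j}) ω := by
        intro ω
        have hptw : ∀ (a : X) (b : S),
            ind (({ω : Traj X S Y N | (∀ j : Fin N, (t : ℕ) ≤ (j : ℕ) + v ∧ (j : ℕ) ≤ (t : ℕ) → ω.1 j = (Function.update xf ⟨(t : ℕ) - v, by have := t.isLt; omega⟩ a) j) ∧ ∀ j : Fin (N + 1), (t : ℕ) ≤ (j : ℕ) + v ∧ (j : ℕ) + u ≤ (t : ℕ) + 1 → ω.2.1 j = (Function.update sf ⟨(t : ℕ) - v, by have := t.isLt; omega⟩ b) j} : Set (Traj X S Y N)) ∩ {ω : Traj X S Y N | ∀ j : Fin N, (j : ℕ) + u ≤ (t : ℕ)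 → ω.2.2 j = yh j}) ω
              = ind (({ω : Traj X S Y N | (∀ j : Fin N, (t : ℕ) + 1 ≤ (j : ℕ) + v ∧ (j : ℕ) ≤ (t : ℕ) → ω.1 j = xf j) ∧ ∀ j : Fin (N + 1), (t : ℕ) + 1 ≤ (j : ℕ) + v ∧ (j : ℕ) + u ≤ (t : ℕ) + 1 → ω.2.1 j = sf j} : Set (Traj X S Y N)) ∩ {ω : Traj X S Y N | ∀ j : Fin N, (j : ℕ) + u ≤ (t : ℕ) → ω.2.2 j = yh j}) ω *
                ((if ω.1 ⟨(t : ℕ) - v, h4⟩ = a then (1 : ℝ) else 0) *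
                  (if ω.2.1 ⟨(t : ℕ) - v, h5⟩ = b then (1 : ℝ) else 0)) := by
          intro a b
          unfold ind
          by_cases hm : ω ∈ (({ω : Traj X S Y N | (∀ j : Fin N, (t : ℕ) ≤ (j : ℕ) + v ∧ (j : ℕ) ≤ (t : ℕ) → ω.1 j = (Function.update xf ⟨(t : ℕ) - v, by have := t.isLt; omega⟩ a) j) ∧ ∀ j : Fin (N + 1), (t : ℕ) ≤ (j : ℕ) + v ∧ (j : ℕ) + u ≤ (t : ℕ) + 1 → ω.2.1 j = (Function.update sf ⟨(t : ℕ) - v, by have := t.isLt; omega⟩ b) j} : Set (Traj X S Y N)) ∩ {ω : Traj X S Y N | ∀ j : Fin N, (j : ℕ) + u ≤ (t : ℕ) → ω.2.2 j = yh j})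
          · have h' := (hiffN a b ω).mp hm
            rw [if_pos hm, if_pos h'.1, if_pos h'.2.1, if_pos h'.2.2]
            norm_num
          · rw [if_neg hm]
            by_cases c1 : ω ∈ (({ω : Traj X S Y N | (∀ j : Fin N, (t : ℕ) + 1 ≤ (j : ℕ) + v ∧ (j : ℕ) ≤ (t : ℕ) → ω.1 j = xf j) ∧ ∀ j : Fin (N + 1), (t : ℕ) + 1 ≤ (j : ℕ) + v ∧ (j : ℕ) + u ≤ (t : ℕ) + 1 → ω.2.1 j = sf j} : Set (Traj X S Y N)) ∩ {ω : Traj X S Y N | ∀ j : Fin N, (j : ℕ) + u ≤ (t : ℕ) → ω.2.2 j = yh j})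
            · by_cases c2 : ω.1 ⟨(t : ℕ) - v, h4⟩ = a
              · by_cases c3 : ω.2.1 ⟨(t : ℕ) - v, h5⟩ = b
                · exact absurd ((hiffN a b ω).mpr ⟨c1, c2, c3⟩) hm
                · rw [if_neg c3]; ring
              · rw [if_neg c2]; ring
            · rw [if_neg c1]; ring
        rw [Finset.sum_congr rfl fun a _ => Finset.sum_congr rfl fun b _ => hptw a b]
        have hgb : (∑ b : S, if ω.2.1 ⟨(t : ℕ) - v, h5⟩ = b then (1 : ℝ) else 0) = 1 := by
          rw [Finset.sum_ite_eq Finset.univ (ω.2.1 ⟨(t : ℕ) - v, h5⟩) (fun _ => (1 : ℝ))]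
          simp
        have hga : (∑ a : X, if ω.1 ⟨(t : ℕ) - v, h4⟩ = a then (1 : ℝ) else 0) = 1 := by
          rw [Finset.sum_ite_eq Finset.univ (ω.1 ⟨(t : ℕ) - v, h4⟩) (fun _ => (1 : ℝ))]
          simp
        have e1 : ∀ a : X, (∑ b : S,
            ind (({ω : Traj X S Y N | (∀ j : Fin N, (t : ℕ) + 1 ≤ (j : ℕ) + v ∧ (j : ℕ) ≤ (t : ℕ) → ω.1 j = xf j) ∧ ∀ j : Fin (N + 1), (t : ℕ) + 1 ≤ (j : ℕ) + v ∧ (j : ℕ) + u ≤ (t : ℕ) + 1 → ω.2.1 j = sf j} : Set (Traj X S Y N)) ∩ {ω : Traj X S Y N | ∀ j : Fin N, (j : ℕ) + u ≤ (t : ℕ) → ω.2.2 j = yh j}) ω *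
              ((if ω.1 ⟨(t : ℕ) - v, h4⟩ = a then (1 : ℝ) else 0) *
                (if ω.2.1 ⟨(t : ℕ) - v, h5⟩ = b then (1 : ℝ) else 0)))
            = ind (({ω : Traj X S Y N | (∀ j : Fin N, (t : ℕ) + 1 ≤ (j : ℕ) + v ∧ (j : ℕ) ≤ (t : ℕ) → ω.1 j = xf j) ∧ ∀ j : Fin (N + 1), (t : ℕ) + 1 ≤ (j : ℕ) + v ∧ (j : ℕ) + u ≤ (t : ℕ) + 1 → ω.2.1 j = sf j} : Set (Traj X S Y N)) ∩ {ω : Traj X S Y N | ∀ j : Fin N, (j : ℕ) + u ≤ (t : ℕ) → ω.2.2 j = yh j}) ω *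
                (if ω.1 ⟨(t : ℕ) - v, h4⟩ = a then (1 : ℝ) else 0) := by
          intro a
          rw [← Finset.mul_sum, ← Finset.mul_sum, hgb, mul_one]
        rw [Finset.sum_congr rfl fun a _ => e1 a, ← Finset.mul_sum, hga, mul_one]
      calc prE (jointP ch src) (({ω : Traj X S Y N | (∀ j : Fin N, (t : ℕ) + 1 ≤ (j : ℕ) + v ∧ (j : ℕ) ≤ (t : ℕ) → ω.1 j = xf j) ∧ ∀ j : Fin (N + 1), (t : ℕ) + 1 ≤ (j : ℕ) + v ∧ (j : ℕ) + u ≤ (t : ℕ) + 1 → ω.2.1 j = sf j} : Set (Traj X S Y N)) ∩ {ω : Traj X S Y N | ∀ j : Fin N, (j : ℕ) + u ≤ (t : ℕ) → ω.2.2 j = yh j})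
          = ∑ ω : Traj X S Y N,
              ind (({ω : Traj X S Y N | (∀ j : Fin N, (t : ℕ) + 1 ≤ (j : ℕ) + v ∧ (j : ℕ) ≤ (t : ℕ) → ω.1 j = xf j) ∧ ∀ j : Fin (N + 1), (t : ℕ) + 1 ≤ (j : ℕ) + v ∧ (j : ℕ) + u ≤ (t : ℕ) + 1 → ω.2.1 j = sf j} : Set (Traj X S Y N)) ∩ {ω : Traj X S Y N | ∀ j : Fin N, (j : ℕ) + u ≤ (t : ℕ) → ω.2.2 j = yh j}) ω * jointP ch src ω :=
            prE_eq_sum_ind _ _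
        _ = ∑ ω : Traj X S Y N, ∑ a : X, ∑ b : S,
              ind (({ω : Traj X S Y N | (∀ j : Fin N, (t : ℕ) ≤ (j : ℕ) + v ∧ (j : ℕ) ≤ (t : ℕ) → ω.1 j = (Function.update xf ⟨(t : ℕ) - v, by have := t.isLt; omega⟩ a) j) ∧ ∀ j : Fin (N + 1), (t : ℕ) ≤ (j : ℕ) + v ∧ (j : ℕ) + u ≤ (t : ℕ) + 1 → ω.2.1 j = (Function.update sf ⟨(t : ℕ) - v, by have := t.isLt; omega⟩ b) j} : Set (Traj X S Y N)) ∩ {ω : Traj X S Y N | ∀ j : Fin N, (j : ℕ) + u ≤ (t : ℕ) → ω.2.2 j = yh j}) ω * jointP ch src ω := by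
            refine Finset.sum_congr rfl fun ω _ => ?_
            rw [← hsum1 ω, Finset.sum_mul]
            exact Finset.sum_congr rfl fun a _ => by rw [Finset.sum_mul]
        _ = ∑ a : X, ∑ ω : Traj X S Y N, ∑ b : S,
              ind (({ω : Traj X S Y N | (∀ j : Fin N, (t : ℕ) ≤ (j : ℕ) + v ∧ (j : ℕ) ≤ (t : ℕ) → ω.1 j = (Function.update xf ⟨(t : ℕ) - v, by have := t.isLt; omega⟩ a) j) ∧ ∀ j : Fin (N + 1), (t : ℕ) ≤ (j : ℕ) + v ∧ (j : ℕ) + u ≤ (t : ℕ) + 1 → ω.2.1 j = (Function.update sf ⟨(t : ℕ) - v, by have := t.isLt; omega⟩ b) j} : Set (Traj X S Y N)) ∩ {ω : Traj X S Y N | ∀ j : Fin N, (j : ℕ) + u ≤ (t : ℕ) → ω.2.2 j = yh j}) ω * jointP ch src ω :=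
            Finset.sum_comm
        _ = ∑ a : X, ∑ b : S, ∑ ω : Traj X S Y N,
              ind (({ω : Traj X S Y N | (∀ j : Fin N, (t : ℕ) ≤ (j : ℕ) + v ∧ (j : ℕ) ≤ (t : ℕ) → ω.1 j = (Function.update xf ⟨(t : ℕ) - v, by have := t.isLt; omega⟩ a) j) ∧ ∀ j : Fin (N + 1), (t : ℕ) ≤ (j : ℕ) + v ∧ (j : ℕ) + u ≤ (t : ℕ) + 1 → ω.2.1 j = (Function.update sf ⟨(t : ℕ) - v, by have := t.isLt; omega⟩ b) j} : Set (Traj X S Y N)) ∩ {ω : Traj X S Y N | ∀ j : Fin N, (j : ℕ) + u ≤ (t : ℕ) → ω.2.2 j = yh j}) ω * jointP ch src ω :=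
            Finset.sum_congr rfl fun a _ => Finset.sum_comm
        _ = ∑ a : X, ∑ b : S,
              prE (jointP ch src) (({ω : Traj X S Y N | (∀ j : Fin N, (t : ℕ) ≤ (j : ℕ) + v ∧ (j : ℕ) ≤ (t : ℕ) → ω.1 j = (Function.update xf ⟨(t : ℕ) - v, by have := t.isLt; omega⟩ a) j) ∧ ∀ j : Fin (N + 1), (t : ℕ) ≤ (j : ℕ) + v ∧ (j : ℕ) + u ≤ (t : ℕ) + 1 → ω.2.1 j = (Function.update sf ⟨(t : ℕ) - v, by have := t.isLt; omega⟩ b) j} : Set (Traj X S Y N)) ∩ {ω : Traj X S Y N | ∀ j : Fin N, (j : ℕ) + u ≤ (t : ℕ) → ω.2.2 j = yh j}) :=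
            Finset.sum_congr rfl fun a _ => Finset.sum_congr rfl fun b _ =>
              (prE_eq_sum_ind _ _).symm
        _ = ∑ a : X, ∑ b : S,
              prE (jointP ch src) ({ω : Traj X S Y N | ∀ j : Fin N, (j : ℕ) + u + 1 ≤ (t : ℕ) → ω.2.2 j = yh j} : Set (Traj X S Y N)) *
                bcjrTerm v ch src t yh
                  (Function.update xf ⟨(t : ℕ) - v, by have := t.isLt; omega⟩ a)
                  (Function.update sf ⟨(t : ℕ) - v, by have := t.isLt; omega⟩ b) :=
            Finset.sum_congr rfl fun a _ => Finset.sum_congr rfl fun b _ => hbeta _ _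
        _ = prE (jointP ch src) ({ω : Traj X S Y N | ∀ j : Fin N, (j : ℕ) + u + 1 ≤ (t : ℕ) → ω.2.2 j = yh j} : Set (Traj X S Y N)) *
              ∑ a : X, ∑ b : S, bcjrTerm v ch src t yh
                (Function.update xf ⟨(t : ℕ) - v, by have := t.isLt; omega⟩ a)
                (Function.update sf ⟨(t : ℕ) - v, by have := t.isLt; omega⟩ b) := by
            rw [Finset.mul_sum]
            exact Finset.sum_congr rfl fun a _ => (Finset.mul_sum _ _ _).symm
    · rw [if_neg hvt]
      have hAeq : ({ω : Traj X S Y N | (∀ j : Fin N, (t : ℕ) + 1 ≤ (j : ℕ) + v ∧ (j : ℕ) ≤ (t : ℕ) → ω.1 j = xf j) ∧ ∀ j : Fin (N + 1), (t : ℕ) + 1 ≤ (j : ℕ) + v ∧ (j : ℕ) + u ≤ (t : ℕ) + 1 → ω.2.1 j = sf j} : Set (Traj X S Y N)) = {ω : Traj X S Y N | (∀ j : Fin N, (t : ℕ) ≤ (j : ℕ) + v ∧ (j : ℕ) ≤ (t : ℕ) → ω.1 j = xf j) ∧ ∀ j : Fin (N + 1), (t : ℕ) ≤ (j : ℕ)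 + v ∧ (j : ℕ) + u ≤ (t : ℕ) + 1 → ω.2.1 j = sf j} := by
        ext ω
        simp only [Set.mem_setOf_eq]
        constructor <;> rintro ⟨hx, hs⟩ <;>
          exact ⟨fun j hj => hx j ⟨by omega, hj.2⟩, fun j hj => hs j ⟨by omega, hj.2⟩⟩
      rw [hAeq]
      exact hbeta xf sf
  have hden : prE (jointP ch src) ({ω : Traj X S Y N | ∀ j : Fin N, (j : ℕ) + u ≤ (t : ℕ) → ω.2.2 j = yh j} : Set (Traj X S Y N))
      = prE (jointP ch src) ({ω : Traj X S Y N | ∀ j : Fin N, (j : ℕ) + u + 1 ≤ (t : ℕ) → ω.2.2 j = yh j} : Set (Traj X S Y N)) *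
        (∑ xg : Fin N → X, ∑ sg : Fin (N + 1) → S,
          if ((∀ j : Fin N, ¬((t : ℕ) ≤ (j : ℕ) + v ∧ (j : ℕ) ≤ (t : ℕ)) → xg j = xf j) ∧ (∀ j : Fin (N + 1), ¬((t : ℕ) ≤ (j : ℕ) + v ∧ (j : ℕ) + u ≤ (t : ℕ) + 1) → sg j = sf j)) then bcjrTerm v ch src t yh xg sg else 0) := by
    have hiffD : ∀ (xg : Fin N → X) (sg : Fin (N + 1) → S) (ω : Traj X S Y N),
        (((∀ j : Fin N, ¬((t : ℕ) ≤ (j : ℕ) + v ∧ (j : ℕ) ≤ (t : ℕ)) → xg j = xf j) ∧ (∀ j : Fin (N + 1), ¬((t : ℕ) ≤ (j : ℕ) + v ∧ (j : ℕ) + u ≤ (t : ℕ) + 1) → sg j = sf j)) ∧ ω ∈ (({ω : Traj X S Y N | (∀ j : Fin N, (t : ℕ) ≤ (j : ℕ) + v ∧ (j : ℕ) ≤ (t : ℕ) → ω.1 j = xg j) ∧ ∀ j : Fin (N + 1), (t : ℕ) ≤ (j : ℕ) + v ∧ (j : ℕ) + u ≤ (t : ℕ) + 1 → ω.2.1 j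 = sg j} : Set (Traj X S Y N)) ∩ {ω : Traj X S Y N | ∀ j : Fin N, (j : ℕ) + u ≤ (t : ℕ) → ω.2.2 j = yh j})) ↔
          (ω ∈ ({ω : Traj X S Y N | ∀ j : Fin N, (j : ℕ) + u ≤ (t : ℕ) → ω.2.2 j = yh j} : Set (Traj X S Y N)) ∧ xg = (fun j : Fin N => if (t : ℕ) ≤ (j : ℕ) + v ∧ (j : ℕ) ≤ (t : ℕ) then ω.1 j else xf j) ∧ sg = (fun j : Fin (N + 1) => if (t : ℕ) ≤ (j : ℕ) + v ∧ (j : ℕ) + u ≤ (t : ℕ) + 1 then ω.2.1 j else sf j)) := by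
      intro xg sg ω
      simp only [Set.mem_inter_iff, Set.mem_setOf_eq]
      constructor
      · rintro ⟨⟨hcx, hcs⟩, ⟨hx, hs⟩, hy⟩
        refine ⟨hy, funext fun j => ?_, funext fun j => ?_⟩
        · by_cases hw : (t : ℕ) ≤ (j : ℕ) + v ∧ (j : ℕ) ≤ (t : ℕ)
          · rw [if_pos hw]; exact (hx j hw).symm
          · rw [if_neg hw]; exact hcx j hw
        · by_cases hw : (t : ℕ) ≤ (j : ℕ) + v ∧ (j : ℕ) + u ≤ (t : ℕ) + 1
          · rw [if_pos hw]; exact (hs j hw).symm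
          · rw [if_neg hw]; exact hcs j hw
      · rintro ⟨hy, hxg, hsg⟩
        subst hxg
        subst hsg
        exact ⟨⟨fun j hj => if_neg hj, fun j hj => if_neg hj⟩,
          ⟨fun j hj => (if_pos hj).symm, fun j hj => (if_pos hj).symm⟩, hy⟩
    have hsum2 : ∀ ω : Traj X S Y N,
        (∑ xg : Fin N → X, ∑ sg : Fin (N + 1) → S,
          if ((∀ j : Fin N, ¬((t : ℕ) ≤ (j : ℕ) + v ∧ (j : ℕ) ≤ (t : ℕ)) → xg j = xf j) ∧ (∀ j : Fin (N + 1), ¬((t : ℕ) ≤ (j : ℕ) + v ∧ (j : ℕ) + u ≤ (t : ℕ) + 1) → sg j = sf j)) then ind (({ω : Traj X S Y N | (∀ j : Fin N, (t : ℕ) ≤ (j : ℕ) + v ∧ (j : ℕ) ≤ (t : ℕ) → ω.1 j = xg j) ∧ ∀ j : Fin (N + 1), (t : ℕ) ≤ (j : ℕ) + v ∧ (j : ℕ) + u ≤ (t : ℕ) + 1 → ω.2.1 j = sg j} : Set (Traj X S Y N)) ∩ {ω : Traj X S Y N | ∀ j : Fin N, (j : ℕ) + u ≤ (t : ℕ)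 → ω.2.2 j = yh j}) ω else 0)
          = ind ({ω : Traj X S Y N | ∀ j : Fin N, (j : ℕ) + u ≤ (t : ℕ) → ω.2.2 j = yh j} : Set (Traj X S Y N)) ω := by
      intro ω
      have hptw : ∀ (xg : Fin N → X) (sg : Fin (N + 1) → S),
          (if ((∀ j : Fin N, ¬((t : ℕ) ≤ (j : ℕ) + v ∧ (j : ℕ) ≤ (t : ℕ)) → xg j = xf j) ∧ (∀ j : Fin (N + 1), ¬((t : ℕ) ≤ (j : ℕ) + v ∧ (j : ℕ) + u ≤ (t : ℕ) + 1) → sg j = sf j)) then ind (({ω : Traj X S Y N | (∀ j : Fin N, (t : ℕ) ≤ (j : ℕ) + v ∧ (j : ℕ) ≤ (t : ℕ) → ω.1 j = xg j) ∧ ∀ j : Fin (N + 1), (t : ℕ) ≤ (j : ℕ) + v ∧ (j : ℕ) + u ≤ (t : ℕ) + 1 → ω.2.1 j = sg j} : Set (Traj X S Y N)) ∩ {ω : Traj X S Y N | ∀ j : Fin N, (j : ℕ) + u ≤ (t : ℕ) → ω.2.2 j = yh j}) ω else 0)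
            = ind ({ω : Traj X S Y N | ∀ j : Fin N, (j : ℕ) + u ≤ (t : ℕ) → ω.2.2 j = yh j} : Set (Traj X S Y N)) ω *
              ((if xg = (fun j : Fin N => if (t : ℕ) ≤ (j : ℕ) + v ∧ (j : ℕ) ≤ (t : ℕ) then ω.1 j else xf j) then (1 : ℝ) else 0) * (if sg = (fun j : Fin (N + 1) => if (t : ℕ) ≤ (j : ℕ) + v ∧ (j : ℕ) + u ≤ (t : ℕ) + 1 then ω.2.1 j else sf j) then (1 : ℝ) else 0)) := by
        intro xg sg
        unfold ind
        by_cases hc : ((∀ j : Fin N, ¬((t : ℕ) ≤ (j : ℕ) + v ∧ (j : ℕ) ≤ (t : ℕ)) → xg j = xf j) ∧ (∀ j : Fin (N + 1), ¬((t : ℕ) ≤ (j : ℕ) + v ∧ (j : ℕ) + u ≤ (t : ℕ) + 1) → sg j = sf j))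
        · rw [if_pos hc]
          by_cases hm : ω ∈ (({ω : Traj X S Y N | (∀ j : Fin N, (t : ℕ) ≤ (j : ℕ) + v ∧ (j : ℕ) ≤ (t : ℕ) → ω.1 j = xg j) ∧ ∀ j : Fin (N + 1), (t : ℕ) ≤ (j : ℕ) + v ∧ (j : ℕ) + u ≤ (t : ℕ) + 1 → ω.2.1 j = sg j} : Set (Traj X S Y N)) ∩ {ω : Traj X S Y N | ∀ j : Fin N, (j : ℕ) + u ≤ (t : ℕ) → ω.2.2 j = yh j})
          · have h' := (hiffD xg sg ω).mp ⟨hc, hm⟩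
            rw [if_pos hm, if_pos h'.1, if_pos h'.2.1, if_pos h'.2.2]
            norm_num
          · rw [if_neg hm]
            by_cases c1 : ω ∈ ({ω : Traj X S Y N | ∀ j : Fin N, (j : ℕ) + u ≤ (t : ℕ) → ω.2.2 j = yh j} : Set (Traj X S Y N))
            · by_cases c2 : xg = (fun j : Fin N => if (t : ℕ) ≤ (j : ℕ) + v ∧ (j : ℕ) ≤ (t : ℕ) then ω.1 j else xf j)
              · by_cases c3 : sg = (fun j : Fin (N + 1) => if (t : ℕ) ≤ (j : ℕ) + v ∧ (j : ℕ) + u ≤ (t : ℕ) + 1 then ω.2.1 j else sf j)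
                · exact absurd ((hiffD xg sg ω).mpr ⟨c1, c2, c3⟩).2 hm
                · rw [if_neg c3]; ring
              · rw [if_neg c2]; ring
            · rw [if_neg c1]; ring
        · rw [if_neg hc]
          by_cases c1 : ω ∈ ({ω : Traj X S Y N | ∀ j : Fin N, (j : ℕ) + u ≤ (t : ℕ) → ω.2.2 j = yh j} : Set (Traj X S Y N))
          · by_cases c2 : xg = (fun j : Fin N => if (t : ℕ) ≤ (j : ℕ) + v ∧ (j : ℕ) ≤ (t : ℕ) then ω.1 j else xf j)
            · by_cases c3 : sg = (fun j : Fin (N + 1) => if (t : ℕ) ≤ (j : ℕ) + v ∧ (j : ℕ) + u ≤ (t : ℕ) + 1 then ω.2.1 j else sf j)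
              · exact absurd ((hiffD xg sg ω).mpr ⟨c1, c2, c3⟩).1 hc
              · rw [if_neg c3]; ring
            · rw [if_neg c2]; ring
          · rw [if_neg c1]; ring
      rw [Finset.sum_congr rfl fun xg _ => Finset.sum_congr rfl fun sg _ => hptw xg sg]
      have hgb : (∑ sg : Fin (N + 1) → S, if sg = (fun j : Fin (N + 1) => if (t : ℕ) ≤ (j : ℕ) + v ∧ (j : ℕ) + u ≤ (t : ℕ) + 1 then ω.2.1 j else sf j) then (1 : ℝ) else 0) = 1 := by
        rw [Finset.sum_ite_eq' Finset.univ ((fun j : Fin (N + 1) => if (t : ℕ) ≤ (j : ℕ) + v ∧ (j : ℕ) + u ≤ (t : ℕ) + 1 then ω.2.1 j else sf j)) (fun _ => (1 : ℝ))]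
        simp
      have hga : (∑ xg : Fin N → X, if xg = (fun j : Fin N => if (t : ℕ) ≤ (j : ℕ) + v ∧ (j : ℕ) ≤ (t : ℕ) then ω.1 j else xf j) then (1 : ℝ) else 0) = 1 := by
        rw [Finset.sum_ite_eq' Finset.univ ((fun j : Fin N => if (t : ℕ) ≤ (j : ℕ) + v ∧ (j : ℕ) ≤ (t : ℕ) then ω.1 j else xf j)) (fun _ => (1 : ℝ))]
        simp
      have e1 : ∀ xg : Fin N → X, (∑ sg : Fin (N + 1) → S,
          ind ({ω : Traj X S Y N | ∀ j : Fin N, (j : ℕ) + u ≤ (t : ℕ) → ω.2.2 j = yh j} : Set (Traj X S Y N)) ω *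
            ((if xg = (fun j : Fin N => if (t : ℕ) ≤ (j : ℕ) + v ∧ (j : ℕ) ≤ (t : ℕ) then ω.1 j else xf j) then (1 : ℝ) else 0) * (if sg = (fun j : Fin (N + 1) => if (t : ℕ) ≤ (j : ℕ) + v ∧ (j : ℕ) + u ≤ (t : ℕ) + 1 then ω.2.1 j else sf j) then (1 : ℝ) else 0)))
          = ind ({ω : Traj X S Y N | ∀ j : Fin N, (j : ℕ) + u ≤ (t : ℕ) → ω.2.2 j = yh j} : Set (Traj X S Y N)) ω * (if xg = (fun j : Fin N => if (t : ℕ) ≤ (j : ℕ) + v ∧ (j : ℕ) ≤ (t : ℕ) then ω.1 j else xf j) then (1 : ℝ) else 0) := by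
        intro xg
        rw [← Finset.mul_sum, ← Finset.mul_sum, hgb, mul_one]
      rw [Finset.sum_congr rfl fun xg _ => e1 xg, ← Finset.mul_sum, hga, mul_one]
    calc prE (jointP ch src) ({ω : Traj X S Y N | ∀ j : Fin N, (j : ℕ) + u ≤ (t : ℕ) → ω.2.2 j = yh j} : Set (Traj X S Y N))
        = ∑ ω : Traj X S Y N, ind ({ω : Traj X S Y N | ∀ j : Fin N, (j : ℕ) + u ≤ (t : ℕ) → ω.2.2 j = yh j} : Set (Traj X S Y N)) ω * jointP ch src ω :=
          prE_eq_sum_ind _ _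
      _ = ∑ ω : Traj X S Y N, ∑ xg : Fin N → X, ∑ sg : Fin (N + 1) → S,
            (if ((∀ j : Fin N, ¬((t : ℕ) ≤ (j : ℕ) + v ∧ (j : ℕ) ≤ (t : ℕ)) → xg j = xf j) ∧ (∀ j : Fin (N + 1), ¬((t : ℕ) ≤ (j : ℕ) + v ∧ (j : ℕ) + u ≤ (t : ℕ) + 1) → sg j = sf j)) then ind (({ω : Traj X S Y N | (∀ j : Fin N, (t : ℕ) ≤ (j : ℕ) + v ∧ (j : ℕ) ≤ (t : ℕ) → ω.1 j = xg j) ∧ ∀ j : Fin (N + 1), (t : ℕ) ≤ (j : ℕ) + v ∧ (j : ℕ) + u ≤ (t : ℕ) + 1 → ω.2.1 j = sg j} : Set (Traj X S Y N)) ∩ {ω : Traj X S Y N | ∀ j : Fin N, (j : ℕ) + u ≤ (t : ℕ) → ω.2.2 j = yh j}) ω else 0) *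
              jointP ch src ω := by
          refine Finset.sum_congr rfl fun ω _ => ?_
          rw [← hsum2 ω, Finset.sum_mul]
          exact Finset.sum_congr rfl fun xg _ => by rw [Finset.sum_mul]
      _ = ∑ xg : Fin N → X, ∑ ω : Traj X S Y N, ∑ sg : Fin (N + 1) → S,
            (if ((∀ j : Fin N, ¬((t : ℕ) ≤ (j : ℕ) + v ∧ (j : ℕ) ≤ (t : ℕ)) → xg j = xf j) ∧ (∀ j : Fin (N + 1), ¬((t : ℕ) ≤ (j : ℕ) + v ∧ (j : ℕ) + u ≤ (t : ℕ) + 1) → sg j = sf j)) then ind (({ω : Traj X S Y N | (∀ j : Fin N, (t : ℕ) ≤ (j : ℕ) + v ∧ (j : ℕ) ≤ (t : ℕ) → ω.1 j = xg j) ∧ ∀ j : Fin (N + 1), (t : ℕ) ≤ (j : ℕ) + v ∧ (j : ℕ) + u ≤ (t : ℕ) + 1 → ω.2.1 j = sg j} : Set (Traj X S Y N)) ∩ {ω : Traj X S Y N | ∀ j : Fin N, (j : ℕ) + u ≤ (t : ℕ) → ω.2.2 j = yh j}) ω else 0) *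
              jointP ch src ω := Finset.sum_comm
      _ = ∑ xg : Fin N → X, ∑ sg : Fin (N + 1) → S, ∑ ω : Traj X S Y N,
            (if ((∀ j : Fin N, ¬((t : ℕ) ≤ (j : ℕ) + v ∧ (j : ℕ) ≤ (t : ℕ)) → xg j = xf j) ∧ (∀ j : Fin (N + 1), ¬((t : ℕ) ≤ (j : ℕ) + v ∧ (j : ℕ) + u ≤ (t : ℕ) + 1) → sg j = sf j)) then ind (({ω : Traj X S Y N | (∀ j : Fin N, (t : ℕ) ≤ (j : ℕ) + v ∧ (j : ℕ) ≤ (t : ℕ) → ω.1 j = xg j) ∧ ∀ j : Fin (N + 1), (t : ℕ) ≤ (j : ℕ) + v ∧ (j : ℕ) + u ≤ (t : ℕ) + 1 → ω.2.1 j = sg j} : Set (Traj X S Y N)) ∩ {ω : Traj X S Y N | ∀ j : Fin N, (j : ℕ) + u ≤ (t : ℕ) → ω.2.2 j = yh j}) ω else 0) *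
              jointP ch src ω := Finset.sum_congr rfl fun xg _ => Finset.sum_comm
      _ = ∑ xg : Fin N → X, ∑ sg : Fin (N + 1) → S,
            (if ((∀ j : Fin N, ¬((t : ℕ) ≤ (j : ℕ) + v ∧ (j : ℕ) ≤ (t : ℕ)) → xg j = xf j) ∧ (∀ j : Fin (N + 1), ¬((t : ℕ) ≤ (j : ℕ) + v ∧ (j : ℕ) + u ≤ (t : ℕ) + 1) → sg j = sf j)) then
              prE (jointP ch src) (({ω : Traj X S Y N | (∀ j : Fin N, (t : ℕ) ≤ (j : ℕ) + v ∧ (j : ℕ) ≤ (t : ℕ) → ω.1 j = xg j) ∧ ∀ j : Fin (N + 1), (t : ℕ) ≤ (j : ℕ) + v ∧ (j : ℕ) + u ≤ (t : ℕ) + 1 → ω.2.1 j = sg j} : Set (Traj X S Y N)) ∩ {ω : Traj X S Y N | ∀ j : Fin N, (j : ℕ) + u ≤ (t : ℕ) → ω.2.2 j = yh j}) else 0) := by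
          refine Finset.sum_congr rfl fun xg _ => Finset.sum_congr rfl fun sg _ => ?_
          by_cases hc : ((∀ j : Fin N, ¬((t : ℕ) ≤ (j : ℕ) + v ∧ (j : ℕ) ≤ (t : ℕ)) → xg j = xf j) ∧ (∀ j : Fin (N + 1), ¬((t : ℕ) ≤ (j : ℕ) + v ∧ (j : ℕ) + u ≤ (t : ℕ) + 1) → sg j = sf j))
          · rw [if_pos hc, prE_eq_sum_ind]
            exact Finset.sum_congr rfl fun ω _ => by rw [if_pos hc]
          · rw [if_neg hc]
            refine Finset.sum_eq_zero fun ω _ => ?_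
            rw [if_neg hc, zero_mul]
      _ = ∑ xg : Fin N → X, ∑ sg : Fin (N + 1) → S,
            (if ((∀ j : Fin N, ¬((t : ℕ) ≤ (j : ℕ) + v ∧ (j : ℕ) ≤ (t : ℕ)) → xg j = xf j) ∧ (∀ j : Fin (N + 1), ¬((t : ℕ) ≤ (j : ℕ) + v ∧ (j : ℕ) + u ≤ (t : ℕ) + 1) → sg j = sf j)) then
              prE (jointP ch src) ({ω : Traj X S Y N | ∀ j : Fin N, (j : ℕ) + u + 1 ≤ (t : ℕ) → ω.2.2 j = yh j} : Set (Traj X S Y N)) *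
                bcjrTerm v ch src t yh xg sg else 0) := by
          refine Finset.sum_congr rfl fun xg _ => Finset.sum_congr rfl fun sg _ => ?_
          by_cases hc : ((∀ j : Fin N, ¬((t : ℕ) ≤ (j : ℕ) + v ∧ (j : ℕ) ≤ (t : ℕ)) → xg j = xf j) ∧ (∀ j : Fin (N + 1), ¬((t : ℕ) ≤ (j : ℕ) + v ∧ (j : ℕ) + u ≤ (t : ℕ) + 1) → sg j = sf j))
          · rw [if_pos hc, if_pos hc, hbeta xg sg]
          · rw [if_neg hc, if_neg hc]
      _ = prE (jointP ch src) ({ω : Traj X S Y N | ∀ j : Fin N, (j : ℕ) + u + 1 ≤ (t : ℕ) → ω.2.2 j = yh j} : Set (Traj X S Y N)) *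
            ∑ xg : Fin N → X, ∑ sg : Fin (N + 1) → S,
              (if ((∀ j : Fin N, ¬((t : ℕ) ≤ (j : ℕ) + v ∧ (j : ℕ) ≤ (t : ℕ)) → xg j = xf j) ∧ (∀ j : Fin (N + 1), ¬((t : ℕ) ≤ (j : ℕ) + v ∧ (j : ℕ) + u ≤ (t : ℕ) + 1) → sg j = sf j)) then bcjrTerm v ch src t yh xg sg else 0) := by
          rw [Finset.mul_sum]
          refine Finset.sum_congr rfl fun xg _ => ?_
          rw [Finset.mul_sum]
          refine Finset.sum_congr rfl fun sg _ => ?_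
          by_cases hc : ((∀ j : Fin N, ¬((t : ℕ) ≤ (j : ℕ) + v ∧ (j : ℕ) ≤ (t : ℕ)) → xg j = xf j) ∧ (∀ j : Fin (N + 1), ¬((t : ℕ) ≤ (j : ℕ) + v ∧ (j : ℕ) + u ≤ (t : ℕ) + 1) → sg j = sf j))
          · rw [if_pos hc, if_pos hc]
          · rw [if_neg hc, if_neg hc, mul_zero]
  unfold condPr
  rw [hnum, hden]
  exact mul_div_mul_left _ _ hFne

end FSCPaper
end
end

section
/- Sufficient-statistic property of the a posteriori vector (equation (eqnIleftprob)/(eqnIYytoalpha)): For a non-controllable FSC with a source in 𝒫'_v(u,u) (0 ≤ u ≤ v), let t satisfy u+1 ≤ t ≤ N and let y^{t-u-1} and ỹ^{t-u-1} be two output histories of positive probability with α_{t-1}(y^{t-u-1}) = α_{t-1}(ỹ^{t-u-1}). Then for all (x_{t-v}^t, s_{t-v-1}, y_{t-u}^t) (windows truncated for small indices): Pr(X_{t-v}^t = x_{t-v}^t, S_{t-v-1} = s_{t-v-1}, Y_{t-u}^t = y_{t-u}^t | Y^{t-u-1} = y^{t-u-1}) = Pr(X_{t-v}^t = x_{t-v}^t,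 S_{t-v-1} = s_{t-v-1}, Y_{t-u}^t = y_{t-u}^t | Y^{t-u-1} = ỹ^{t-u-1}). That is, the conditional joint law of (X_{t-v}^t, S_{t-v-1}, Y_{t-u}^t) given the past outputs depends on the past outputs only through the a posteriori vector α_{t-1}. -/
/-!
Common framework: finite-state channels (FSCs), non-controllable FSCs,
sources with delayed feedback (FB) and delayed state information (SI),
induced joint pmfs, conditional probabilities and conditional mutual
information, following Huang–Kavčić–Ma, "Upper Bounds on the Capacities of
Non-Controllable Finite-State Channels with/without Feedback".

Time convention: for a horizon `N`, the channel inputs are `X_1,…,X_N`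
(coordinate `x i` of `x : Fin N → X` is `X_{i+1}`), the states are
`S_0,…,S_N` (coordinate `s j` of `s : Fin (N+1) → S` is `S_j`), and the
outputs are `Y_1,…,Y_N` (coordinate `y i` is `Y_{i+1}`).
-/

open Finset

noncomputable section

namespace FSCPaper

variable {X S Y : Type} [Fintype X] [Fintype S] [Fintype Y]

section Statement10Aux

variable {N u : ℕ}

attribute [local instance] Classical.propDecidable

/-- The per-time factor of the joint pmf. -/
def trm (ch : NCFSC X S Y) (src : Source X S Y N u) (i : Fin N) (ω : Traj X S Y N) : ℝ :=
  src.pol i ω.1 ω.2.1 ω.2.2 (ω.1 i) *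
    ch.W (ω.2.2 i) (ω.2.1 i.succ) (ω.1 i) (ω.2.1 i.castSucc)

lemma jointP_eq_prod_trm (ch : NCFSC X S Y) (src : Source X S Y N u) (ω : Traj X S Y N) :
    jointP ch src ω = ch.init (ω.2.1 0) * ∏ i : Fin N, trm ch src i ω := rfl

lemma trm_nonneg (ch : NCFSC X S Y) (src : Source X S Y N u) (i : Fin N) (ω : Traj X S Y N) :
    0 ≤ trm ch src i ω :=
  mul_nonneg (src.nonneg _ _ _ _ _) (mul_nonneg (ch.P_nonneg _ _ _) (ch.Q_nonneg _ _))

/-- Truncated (marginalized) weight: product of the factors with time `< m`. -/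
def qcut (ch : NCFSC X S Y) (src : Source X S Y N u) (m : ℕ) (ω : Traj X S Y N) : ℝ :=
  ch.init (ω.2.1 0) * ∏ i : Fin N, if (i : ℕ) < m then trm ch src i ω else 1

lemma qcut_nonneg (ch : NCFSC X S Y) (src : Source X S Y N u) (m : ℕ) (ω : Traj X S Y N) :
    0 ≤ qcut ch src m ω := by
  refine mul_nonneg (ch.init_nonneg _) (Finset.prod_nonneg fun i _ => ?_)
  split_ifs
  · exact trm_nonneg ch src i ω
  · exact zero_le_one

/-- Agreement of two trajectories on all coordinates before the cut `m`. -/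
def cutAgr (m : ℕ) (ρ ω : Traj X S Y N) : Prop :=
  (∀ j : Fin N, (j : ℕ) < m → ω.1 j = ρ.1 j) ∧
    (∀ j : Fin (N + 1), (j : ℕ) ≤ m → ω.2.1 j = ρ.2.1 j) ∧
      ∀ j : Fin N, (j : ℕ) < m → ω.2.2 j = ρ.2.2 j

lemma cutAgr_refl (m : ℕ) (ρ : Traj X S Y N) : cutAgr m ρ ρ :=
  ⟨fun _ _ => rfl, fun _ _ => rfl, fun _ _ => rfl⟩

/-- A factor congruence helper. -/
lemma trm_congr (ch : NCFSC X S Y) (src : Source X S Y N u) (i : Fin N) (ω ω' : Traj X S Y N)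
    (hx : ∀ j : Fin N, (j : ℕ) ≤ (i : ℕ) → ω.1 j = ω'.1 j)
    (hs : ∀ j : Fin (N + 1), (j : ℕ) ≤ (i : ℕ) + 1 → ω.2.1 j = ω'.2.1 j)
    (hy : ∀ j : Fin N, (j : ℕ) ≤ (i : ℕ) → ω.2.2 j = ω'.2.2 j) :
    trm ch src i ω = trm ch src i ω' := by
  unfold trm
  rw [src.causal i ω.1 ω'.1 ω.2.1 ω'.2.1 ω.2.2 ω'.2.2
      (fun j hj => hx j (by omega)) (fun j hj => hs j (by omega)) (fun j hj => hy j (by omega)),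
    hx i le_rfl, hs i.succ (by simp), hs i.castSucc (by simp), hy i le_rfl]

/-- Marginalization: summing the joint pmf over all trajectories agreeing with `ρ`
before the cut `m` gives the truncated weight. -/
lemma margM (ch : NCFSC X S Y) (src : Source X S Y N u) (d m : ℕ) (hmd : m + d = N)
    (ρ : Traj X S Y N) :
    (∑ ω ∈ Finset.univ.filter (fun ω => cutAgr m ρ ω), jointP ch src ω)
      = qcut ch src m ρ := by
  induction d generalizing m ρ with
  | zero =>
      have hm : m = N := by omega
      have hset : Finset.univ.filter (fun ω => cutAgr m ρ ω) = {ρ} := by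
        ext ω
        simp only [Finset.mem_filter, Finset.mem_univ, true_and, Finset.mem_singleton]
        constructor
        · rintro ⟨hx, hs, hy⟩
          refine Prod.ext (funext fun j => hx j (by omega)) (Prod.ext (funext fun j => ?_)
            (funext fun j => hy j (by omega)))
          exact hs j (by omega)
        · rintro rfl; exact cutAgr_refl _ _
      rw [hset, Finset.sum_singleton, jointP_eq_prod_trm, qcut]
      congr 1
      exact Finset.prod_congr rfl fun i _ => (if_pos (by omega)).symm
  | succ d ih =>
      have hmN : m < N := by omega
      set im : Fin N := ⟨m, hmN⟩ with him
      set im1 : Fin (N + 1) := ⟨m + 1, by omega⟩ with him1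
      set upd : X → Y → S → Traj X S Y N := fun a b c =>
        (Function.update ρ.1 im a, Function.update ρ.2.1 im1 c,
          Function.update ρ.2.2 im b) with hupd
      have hmaps : ∀ ω ∈ Finset.univ.filter (fun ω => cutAgr m ρ ω),
          (fun ω : Traj X S Y N => (ω.1 im, ω.2.2 im, ω.2.1 im1)) ω ∈
            (Finset.univ : Finset (X × Y × S)) := fun _ _ => Finset.mem_univ _
      rw [← Finset.sum_fiberwise_of_maps_to hmaps (jointP ch src)]
      have hset : ∀ a b c,
          (Finset.univ.filter (fun ω => cutAgr m ρ ω)).filter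
              (fun ω : Traj X S Y N => (ω.1 im, ω.2.2 im, ω.2.1 im1) = (a, b, c))
            = Finset.univ.filter (fun ω => cutAgr (m + 1) (upd a b c) ω) := by
        intro a b c
        have hupd1 : (upd a b c).1 = Function.update ρ.1 im a := rfl
        have hupd21 : (upd a b c).2.1 = Function.update ρ.2.1 im1 c := rfl
        have hupd22 : (upd a b c).2.2 = Function.update ρ.2.2 im b := rfl
        ext ω
        simp only [Finset.mem_filter, Finset.mem_univ, true_and, Prod.mk.injEq]
        simp only [cutAgr, hupd1, hupd21, hupd22]
        constructor
        · rintro ⟨⟨hx, hs, hy⟩, ha, hb, hc⟩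
          refine ⟨fun j hj => ?_, fun j hj => ?_, fun j hj => ?_⟩
          · by_cases hjm : (j : ℕ) = m
            · have : j = im := Fin.ext hjm
              rw [this, Function.update_self]; exact ha
            · rw [Function.update_of_ne (fun h => hjm (by rw [h]))]
              exact hx j (by omega)
          · by_cases hjm : (j : ℕ) = m + 1
            · have : j = im1 := Fin.ext hjm
              rw [this, Function.update_self]; exact hc
            · rw [Function.update_of_ne (fun h => hjm (by rw [h]))]
              exact hs j (by omega)
          · by_cases hjm : (j : ℕ) = m
            · have : j = im := Fin.ext hjm
              rw [this, Function.update_self]; exact hb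
            · rw [Function.update_of_ne (fun h => hjm (by rw [h]))]
              exact hy j (by omega)
        · rintro ⟨hx, hs, hy⟩
          have hxm := hx im (by simp [him])
          have hym := hy im (by simp [him])
          have hsm := hs im1 (by simp [him1])
          rw [Function.update_self] at hxm hym hsm
          refine ⟨⟨fun j hj => ?_, fun j hj => ?_, fun j hj => ?_⟩, hxm, hym, hsm⟩
          · rw [hx j (by omega), Function.update_of_ne (fun h => by
              have := congrArg Fin.val h; rw [him] at this; simp at this; omega)]
          · rw [hs j (by omega), Function.update_of_ne (fun h => by
              have := congrArg Fin.val h; rw [him1] at this; simp at this; omega)]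
          · rw [hy j (by omega), Function.update_of_ne (fun h => by
              have := congrArg Fin.val h; rw [him] at this; simp at this; omega)]
      have hq : ∀ a b c, qcut ch src (m + 1) (upd a b c)
          = qcut ch src m ρ * (src.pol im ρ.1 ρ.2.1 ρ.2.2 a *
              (ch.P b a (ρ.2.1 im.castSucc) * ch.Q c (ρ.2.1 im.castSucc))) := by
        intro a b c
        have hag : ∀ j : Fin N, (j : ℕ) ≤ m → (j ≠ im) → (upd a b c).1 j = ρ.1 j := by
          intro j _ hj; exact Function.update_of_ne hj _ _
        have init_eq : (upd a b c).2.1 0 = ρ.2.1 0 := by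
          show Function.update ρ.2.1 im1 c 0 = ρ.2.1 0
          refine Function.update_of_ne (fun h => ?_) _ _
          have := congrArg Fin.val h; rw [him1] at this; simp at this
        have hx' : ∀ j : Fin N, (j : ℕ) < m → (upd a b c).1 j = ρ.1 j := by
          intro j hj
          exact Function.update_of_ne (fun h => by
            have := congrArg Fin.val h; simp [him] at this; omega) _ _
        have hs' : ∀ j : Fin (N + 1), (j : ℕ) ≤ m → (upd a b c).2.1 j = ρ.2.1 j := by
          intro j hj
          exact Function.update_of_ne (fun h => by
            have := congrArg Fin.val h; simp [him1] at this; omega) _ _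
        have hy' : ∀ j : Fin N, (j : ℕ) < m → (upd a b c).2.2 j = ρ.2.2 j := by
          intro j hj
          exact Function.update_of_ne (fun h => by
            have := congrArg Fin.val h; simp [him] at this; omega) _ _
        have hsplit : (∏ i : Fin N, if (i : ℕ) < m + 1 then trm ch src i (upd a b c) else 1)
            = (∏ i : Fin N, if (i : ℕ) < m then trm ch src i (upd a b c) else 1)
                * trm ch src im (upd a b c) := by
          have : ∀ i : Fin N, (if (i : ℕ) < m + 1 then trm ch src i (upd a b c) else 1)
              = (if (i : ℕ) < m then trm ch src i (upd a b c) else 1)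
                  * (if i = im then trm ch src i (upd a b c) else 1) := by
            intro i
            by_cases hi : i = im
            · subst hi
              rw [if_pos (by simp [him]), if_neg (by simp [him]), if_pos rfl, one_mul]
            · have hvi : (i : ℕ) ≠ m := fun h => hi (Fin.ext (by simp [him, h]))
              rw [if_neg hi, mul_one]
              by_cases h2 : (i : ℕ) < m
              · rw [if_pos (by omega), if_pos h2]
              · rw [if_neg (by omega), if_neg h2]
          rw [Finset.prod_congr rfl (fun i _ => this i), Finset.prod_mul_distrib,
            Finset.prod_ite_eq' Finset.univ im (fun i => trm ch src i (upd a b c)),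
            if_pos (Finset.mem_univ _)]
        have hprodcongr : (∏ i : Fin N, if (i : ℕ) < m then trm ch src i (upd a b c) else 1)
            = ∏ i : Fin N, if (i : ℕ) < m then trm ch src i ρ else 1 := by
          refine Finset.prod_congr rfl fun i _ => ?_
          split_ifs with hi
          · exact trm_congr ch src i _ ρ (fun j hj => hx' j (by omega))
              (fun j hj => hs' j (by omega)) (fun j hj => hy' j (by omega))
          · rfl
        have htrm : trm ch src im (upd a b c)
            = src.pol im ρ.1 ρ.2.1 ρ.2.2 a *
                (ch.P b a (ρ.2.1 im.castSucc) * ch.Q c (ρ.2.1 im.castSucc)) := by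
          unfold trm
          have h1 : (upd a b c).1 im = a := Function.update_self _ _ _
          have h2 : (upd a b c).2.2 im = b := Function.update_self _ _ _
          have h3 : (upd a b c).2.1 im.succ = c := by
            have : im.succ = im1 := Fin.ext (by simp [him, him1])
            rw [this]; exact Function.update_self _ _ _
          have h4 : (upd a b c).2.1 im.castSucc = ρ.2.1 im.castSucc :=
            hs' im.castSucc (by simp [him])
          have h5 : src.pol im (upd a b c).1 (upd a b c).2.1 (upd a b c).2.2
              = src.pol im ρ.1 ρ.2.1 ρ.2.2 :=
            src.causal im _ _ _ _ _ _ (fun j hj => hx' j (by simp [him] at hj ⊢; omega))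
              (fun j hj => hs' j (by simp [him] at hj ⊢; omega))
              (fun j hj => hy' j (by simp [him] at hj ⊢; omega))
          rw [h1, h2, h3, h4, h5, NCFSC.W]
        unfold qcut
        rw [hsplit, hprodcongr, init_eq, htrm]
        ring
      calc (∑ y ∈ (Finset.univ : Finset (X × Y × S)),
              ∑ ω ∈ (Finset.univ.filter (fun ω => cutAgr m ρ ω)).filter
                (fun ω : Traj X S Y N => (ω.1 im, ω.2.2 im, ω.2.1 im1) = y),
              jointP ch src ω)
          = ∑ a : X, ∑ b : Y, ∑ c : S, qcut ch src (m + 1) (upd a b c) := by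
            rw [Fintype.sum_prod_type]
            refine Finset.sum_congr rfl fun a _ => ?_
            rw [Fintype.sum_prod_type]
            refine Finset.sum_congr rfl fun b _ => ?_
            refine Finset.sum_congr rfl fun c _ => ?_
            rw [hset a b c]
            exact ih (m + 1) (by omega) (upd a b c)
        _ = qcut ch src m ρ := by
            simp only [hq, ← Finset.mul_sum, ch.Q_sum, ch.P_sum, src.sum_one, mul_one]

/-- Prefix-splice of two trajectories. -/
def spl (m : ℕ) (σ ρ : Traj X S Y N) : Traj X S Y N :=
  (fun j => if (j : ℕ) < m then σ.1 j else ρ.1 j,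
    fun j => if (j : ℕ) ≤ m then σ.2.1 j else ρ.2.1 j,
    fun j => if (j : ℕ) < m then σ.2.2 j else ρ.2.2 j)

lemma card_cut_const (m : ℕ) (ω ω' : Traj X S Y N) :
    (Finset.univ.filter fun ρ : Traj X S Y N => cutAgr m ρ ω).card
      = (Finset.univ.filter fun ρ : Traj X S Y N => cutAgr m ρ ω').card := by
  refine Finset.card_nbij' (fun ρ => spl m ω' ρ) (fun ρ => spl m ω ρ) ?_ ?_ ?_ ?_
  · intro ρ hρ
    simp only [Finset.mem_coe, Finset.mem_filter, Finset.mem_univ, true_and] at hρ ⊢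
    exact ⟨fun j hj => (if_pos hj).symm, fun j hj => (if_pos hj).symm,
      fun j hj => (if_pos hj).symm⟩
  · intro ρ hρ
    simp only [Finset.mem_coe, Finset.mem_filter, Finset.mem_univ, true_and] at hρ ⊢
    exact ⟨fun j hj => (if_pos hj).symm, fun j hj => (if_pos hj).symm,
      fun j hj => (if_pos hj).symm⟩
  · intro ρ hρ
    simp only [Finset.mem_coe, Finset.mem_filter, Finset.mem_univ, true_and] at hρ
    obtain ⟨hx, hs, hy⟩ := hρ
    refine Prod.ext (funext fun j => ?_) (Prod.ext (funext fun j => ?_) (funext fun j => ?_)) <;>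
      simp only [spl] <;> split_ifs with h
    · exact hx j h
    · rfl
    · exact hs j h
    · rfl
    · exact hy j h
    · rfl
  · intro ρ hρ
    simp only [Finset.mem_coe, Finset.mem_filter, Finset.mem_univ, true_and] at hρ
    obtain ⟨hx, hs, hy⟩ := hρ
    refine Prod.ext (funext fun j => ?_) (Prod.ext (funext fun j => ?_) (funext fun j => ?_)) <;>
      simp only [spl] <;> split_ifs with h
    · exact hx j h
    · rfl
    · exact hs j h
    · rfl
    · exact hy j h
    · rfl

lemma prE_eq_sum_ite (p : Traj X S Y N → ℝ) (A : Set (Traj X S Y N)) :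
    prE p A = ∑ ω : Traj X S Y N, if ω ∈ A then p ω else 0 := by
  unfold prE
  exact Finset.sum_congr rfl fun ω _ => Set.indicator_apply A p ω

/-- The cut-level (unnormalized) measure. -/
def mea (ch : NCFSC X S Y) (src : Source X S Y N u) (m : ℕ) (A : Set (Traj X S Y N)) : ℝ :=
  ∑ ρ : Traj X S Y N, if ρ ∈ A then qcut ch src m ρ else 0

lemma mea_nonneg (ch : NCFSC X S Y) (src : Source X S Y N u) (m : ℕ) (A : Set (Traj X S Y N)) :
    0 ≤ mea ch src m A := by
  refine Finset.sum_nonneg fun ρ _ => ?_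
  split_ifs
  · exact qcut_nonneg ch src m ρ
  · exact le_refl 0

lemma mea_mono (ch : NCFSC X S Y) (src : Source X S Y N u) (m : ℕ)
    {A B : Set (Traj X S Y N)} (hAB : A ⊆ B) : mea ch src m A ≤ mea ch src m B := by
  refine Finset.sum_le_sum fun ρ _ => ?_
  by_cases hρ : ρ ∈ A
  · rw [if_pos hρ, if_pos (hAB hρ)]
  · rw [if_neg hρ]
    split_ifs
    · exact qcut_nonneg ch src m ρ
    · exact le_refl 0

lemma mea_spec (ch : NCFSC X S Y) (src : Source X S Y N u) (m d : ℕ) (hmd : m + d = N)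
    (ω₀ : Traj X S Y N) (A : Set (Traj X S Y N))
    (hA : ∀ ρ ω, cutAgr m ρ ω → (ω ∈ A ↔ ρ ∈ A)) :
    mea ch src m A
      = ((Finset.univ.filter fun ρ : Traj X S Y N => cutAgr m ρ ω₀).card : ℝ)
          * prE (jointP ch src) A := by
  unfold mea
  calc (∑ ρ : Traj X S Y N, if ρ ∈ A then qcut ch src m ρ else 0)
      = ∑ ρ : Traj X S Y N, ∑ ω ∈ Finset.univ.filter (fun ω => cutAgr m ρ ω),
          (if ω ∈ A then jointP ch src ω else 0) := by
        refine Finset.sum_congr rfl fun ρ _ => ?_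
        by_cases hρ : ρ ∈ A
        · rw [if_pos hρ, ← margM ch src d m hmd ρ]
          refine Finset.sum_congr rfl fun ω hω => ?_
          rw [if_pos ((hA ρ ω (Finset.mem_filter.mp hω).2).mpr hρ)]
        · rw [if_neg hρ]
          refine (Finset.sum_eq_zero fun ω hω => ?_).symm
          rw [if_neg fun h => hρ ((hA ρ ω (Finset.mem_filter.mp hω).2).mp h)]
    _ = ∑ ρ : Traj X S Y N, ∑ ω : Traj X S Y N,
          if cutAgr m ρ ω then (if ω ∈ A then jointP ch src ω else 0) else 0 := by
        refine Finset.sum_congr rfl fun ρ _ => ?_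
        rw [Finset.sum_filter]
    _ = ∑ ω : Traj X S Y N, ∑ ρ : Traj X S Y N,
          if cutAgr m ρ ω then (if ω ∈ A then jointP ch src ω else 0) else 0 :=
        Finset.sum_comm
    _ = ∑ ω : Traj X S Y N,
          ((Finset.univ.filter fun ρ : Traj X S Y N => cutAgr m ρ ω₀).card : ℝ)
            * (if ω ∈ A then jointP ch src ω else 0) := by
        refine Finset.sum_congr rfl fun ω _ => ?_
        rw [← Finset.sum_filter, Finset.sum_const, nsmul_eq_mul, card_cut_const m ω ω₀]
    _ = _ := by
        rw [← Finset.mul_sum, prE_eq_sum_ite]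

/-- Head part of the truncated weight at cut `t+1`. -/
def hdw (ch : NCFSC X S Y) (src : Source X S Y N u) (t : Fin N) (ρ : Traj X S Y N) : ℝ :=
  ch.init (ρ.2.1 0) *
    ((∏ i : Fin N, if (i : ℕ) + u + 1 ≤ (t : ℕ) then trm ch src i ρ else 1) *
      ∏ i : Fin N, if (t : ℕ) ≤ (i : ℕ) + u ∧ (i : ℕ) < (t : ℕ)
        then src.pol i ρ.1 ρ.2.1 ρ.2.2 (ρ.1 i) else 1)

/-- Tail part of the truncated weight at cut `t+1`. -/
def tlw (ch : NCFSC X S Y) (src : Source X S Y N u) (t : Fin N) (ρ : Traj X S Y N) : ℝ :=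
  src.pol t ρ.1 ρ.2.1 ρ.2.2 (ρ.1 t) *
    ∏ i : Fin N, if (t : ℕ) ≤ (i : ℕ) + u ∧ (i : ℕ) ≤ (t : ℕ)
      then ch.W (ρ.2.2 i) (ρ.2.1 i.succ) (ρ.1 i) (ρ.2.1 i.castSucc) else 1

lemma qcut_factor (ch : NCFSC X S Y) (src : Source X S Y N u) (t : Fin N) (ρ : Traj X S Y N) :
    qcut ch src ((t : ℕ) + 1) ρ = hdw ch src t ρ * tlw ch src t ρ := by
  unfold qcut hdw tlw
  have key : ∀ i : Fin N, (if (i : ℕ) < (t : ℕ) + 1 then trm ch src i ρ else 1)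
      = ((if (i : ℕ) + u + 1 ≤ (t : ℕ) then trm ch src i ρ else 1) *
          (if (t : ℕ) ≤ (i : ℕ) + u ∧ (i : ℕ) < (t : ℕ)
            then src.pol i ρ.1 ρ.2.1 ρ.2.2 (ρ.1 i) else 1)) *
        ((if (t : ℕ) ≤ (i : ℕ) + u ∧ (i : ℕ) ≤ (t : ℕ)
            then ch.W (ρ.2.2 i) (ρ.2.1 i.succ) (ρ.1 i) (ρ.2.1 i.castSucc) else 1) *
          (if (i : ℕ) = (t : ℕ) then src.pol i ρ.1 ρ.2.1 ρ.2.2 (ρ.1 i) else 1)) := by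
    intro i
    split_ifs <;> first | (exfalso; omega) | (unfold trm; ring) | ring
  rw [Finset.prod_congr rfl fun i _ => key i, Finset.prod_mul_distrib,
    Finset.prod_mul_distrib, Finset.prod_mul_distrib]
  have hD : (∏ i : Fin N, if (i : ℕ) = (t : ℕ)
      then src.pol i ρ.1 ρ.2.1 ρ.2.2 (ρ.1 i) else 1)
      = src.pol t ρ.1 ρ.2.1 ρ.2.2 (ρ.1 t) := by
    have : ∀ i : Fin N, (if (i : ℕ) = (t : ℕ) then src.pol i ρ.1 ρ.2.1 ρ.2.2 (ρ.1 i) else 1)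
        = (if i = t then src.pol i ρ.1 ρ.2.1 ρ.2.2 (ρ.1 i) else 1) := by
      intro i
      by_cases h : i = t
      · rw [if_pos h, if_pos (by rw [h])]
      · rw [if_neg h, if_neg (fun hv => h (Fin.ext hv))]
    rw [Finset.prod_congr rfl fun i _ => this i,
      Finset.prod_ite_eq' Finset.univ t (fun i => src.pol i ρ.1 ρ.2.1 ρ.2.2 (ρ.1 i)),
      if_pos (Finset.mem_univ _)]
  rw [hD]
  ring

/-- Overwrite the "tail-window" coordinates of `ρ` by those of `τ`. -/
def ovw (tn uu : ℕ) (ρ τ : Traj X S Y N) : Traj X S Y N :=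
  (fun j => if (j : ℕ) = tn then τ.1 j else ρ.1 j,
    fun j => if tn < (j : ℕ) + uu ∧ (j : ℕ) ≤ tn + 1 then τ.2.1 j else ρ.2.1 j,
    fun j => if tn ≤ (j : ℕ) + uu ∧ (j : ℕ) ≤ tn then τ.2.2 j else ρ.2.2 j)

lemma ovw_x (tn uu : ℕ) (ρ τ : Traj X S Y N) (j : Fin N) :
    (ovw tn uu ρ τ).1 j = if (j : ℕ) = tn then τ.1 j else ρ.1 j := rfl

lemma ovw_s (tn uu : ℕ) (ρ τ : Traj X S Y N) (j : Fin (N + 1)) :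
    (ovw tn uu ρ τ).2.1 j
      = if tn < (j : ℕ) + uu ∧ (j : ℕ) ≤ tn + 1 then τ.2.1 j else ρ.2.1 j := rfl

lemma ovw_y (tn uu : ℕ) (ρ τ : Traj X S Y N) (j : Fin N) :
    (ovw tn uu ρ τ).2.2 j
      = if tn ≤ (j : ℕ) + uu ∧ (j : ℕ) ≤ tn then τ.2.2 j else ρ.2.2 j := rfl

lemma ovw_ovw (tn uu : ℕ) (a b : Traj X S Y N) :
    ovw tn uu (ovw tn uu a b) (ovw tn uu b a) = a := by
  refine Prod.ext (funext fun j => ?_) (Prod.ext (funext fun j => ?_) (funext fun j => ?_)) <;>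
    simp only [ovw_x, ovw_s, ovw_y] <;> split_ifs <;> rfl

/-- The head part only depends on the coordinates not moved by `ovw`. -/
lemma hdw_ovw (ch : NCFSC X S Y) (src : Source X S Y N u) (t : Fin N) (htu : u ≤ (t : ℕ))
    (ρ τ : Traj X S Y N) : hdw ch src t (ovw (t : ℕ) u ρ τ) = hdw ch src t ρ := by
  unfold hdw
  have hinit : (ovw (t : ℕ) u ρ τ).2.1 0 = ρ.2.1 0 := by
    rw [ovw_s]
    exact if_neg (by simp; omega)
  rw [hinit]
  congr 1
  congr 1
  · refine Finset.prod_congr rfl fun i _ => ?_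
    split_ifs with hi
    · refine trm_congr ch src i _ ρ (fun j hj => ?_) (fun j hj => ?_) (fun j hj => ?_)
      · rw [ovw_x]; exact if_neg (by omega)
      · rw [ovw_s]; exact if_neg (by omega)
      · rw [ovw_y]; exact if_neg (by omega)
    · rfl
  · refine Finset.prod_congr rfl fun i _ => ?_
    split_ifs with hi
    · have hpol : src.pol i (ovw (t : ℕ) u ρ τ).1 (ovw (t : ℕ) u ρ τ).2.1
          (ovw (t : ℕ) u ρ τ).2.2 = src.pol i ρ.1 ρ.2.1 ρ.2.2 := by
        refine src.causal i _ _ _ _ _ _ (fun j hj => ?_) (fun j hj => ?_) (fun j hj => ?_)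
        · rw [ovw_x]; exact if_neg (by omega)
        · rw [ovw_s]; exact if_neg (by omega)
        · rw [ovw_y]; exact if_neg (by omega)
      have hval : (ovw (t : ℕ) u ρ τ).1 i = ρ.1 i := by
        rw [ovw_x]; exact if_neg (by omega)
      rw [hpol, hval]
    · rfl

/-- The output-history event `{Y^{t-u} = yy}`. -/
def Fev (t : Fin N) (uu : ℕ) (yy : Fin N → Y) : Set (Traj X S Y N) :=
  {ω | ∀ j : Fin N, (j : ℕ) + uu + 1 ≤ (t : ℕ) → ω.2.2 j = yy j}

/-- The target event of Statement 10. -/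
def Eev (t : Fin N) (uu v : ℕ) (xf : Fin N → X) (sf : Fin (N + 1) → S) (yb : Fin N → Y) :
    Set (Traj X S Y N) :=
  {ω | (∀ j : Fin N, (t : ℕ) ≤ (j : ℕ) + v ∧ (j : ℕ) ≤ (t : ℕ) → ω.1 j = xf j) ∧
    (∀ j : Fin (N + 1), (j : ℕ) + v = (t : ℕ) → ω.2.1 j = sf j) ∧
      ∀ j : Fin N, (t : ℕ) ≤ (j : ℕ) + uu ∧ (j : ℕ) ≤ (t : ℕ) → ω.2.2 j = yb j}

/-- The window event of `alphaWinEq`. -/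
def Wev (t : Fin N) (uu v : ℕ) (xf : Fin N → X) (sf : Fin (N + 1) → S) :
    Set (Traj X S Y N) :=
  {ω | (∀ j : Fin N, (t : ℕ) ≤ (j : ℕ) + v ∧ (j : ℕ) < (t : ℕ) → ω.1 j = xf j) ∧
    ∀ j : Fin (N + 1), (t : ℕ) ≤ (j : ℕ) + v ∧ (j : ℕ) + uu ≤ (t : ℕ) → ω.2.1 j = sf j}

/-- The index window of the state part of the a posteriori vector. -/
abbrev WinT (N : ℕ) (t : Fin N) (uu v : ℕ) : Type :=
  {j : Fin (N + 1) // (t : ℕ) ≤ (j : ℕ) + v ∧ (j : ℕ) + uu ≤ (t : ℕ)}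

/-- The fiber event `{S-window = g}`. -/
def fibS {S : Type} (t : Fin N) (uu v : ℕ) (g : WinT N t uu v → S) :
    Set ((Fin N → X) × (Fin (N + 1) → S) × (Fin N → Y)) :=
  {ω | ∀ j : WinT N t uu v, ω.2.1 j.1 = g j}

theorem statement10_aux (ch : NCFSC X S Y) (src : Source X S Y N u) (v : ℕ) (huv : u ≤ v)
    (hMk : IsMarkov v src) (t : Fin N) (htu : u ≤ (t : ℕ)) (yh yh' : Fin N → Y)
    (hposF : 0 < prE (jointP ch src) (Fev t u yh))
    (hposF' : 0 < prE (jointP ch src) (Fev t u yh'))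
    (hpol : ∀ (xg : Fin N → X) (sg : Fin (N + 1) → S) (a : X),
      src.pol t xg sg yh a = src.pol t xg sg yh' a)
    (halpha : ∀ (xg : Fin N → X) (sg : Fin (N + 1) → S),
      condPr (jointP ch src) (Wev t u v xg sg) (Fev t u yh)
        = condPr (jointP ch src) (Wev t u v xg sg) (Fev t u yh'))
    (xf : Fin N → X) (sf : Fin (N + 1) → S) (yb : Fin N → Y) :
    condPr (jointP ch src) (Eev t u v xf sf yb) (Fev t u yh)
      = condPr (jointP ch src) (Eev t u v xf sf yb) (Fev t u yh') := by
  classical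
  have htN : (t : ℕ) < N := t.isLt
  -- nonemptiness of the trajectory space
  have hne : Nonempty (Traj X S Y N) := by
    by_contra h
    rw [not_nonempty_iff] at h
    rw [prE, Finset.univ_eq_empty, Finset.sum_empty] at hposF
    exact lt_irrefl 0 hposF
  obtain ⟨ω₀⟩ := hne
  set k : ℕ := (Finset.univ.filter fun ρ : Traj X S Y N => cutAgr ((t : ℕ) + 1) ρ ω₀).card
    with hkdef
  have hkpos : 0 < k := Finset.card_pos.mpr
    ⟨ω₀, Finset.mem_filter.mpr ⟨Finset.mem_univ _, cutAgr_refl _ ω₀⟩⟩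
  have hk0 : (k : ℝ) ≠ 0 := Nat.cast_ne_zero.mpr hkpos.ne'
  have hdsum : ((t : ℕ) + 1) + (N - ((t : ℕ) + 1)) = N := by omega
  -- prefix determination of the relevant events
  have hprefF : ∀ yy : Fin N → Y, ∀ ρ ω : Traj X S Y N, cutAgr ((t : ℕ) + 1) ρ ω →
      (ω ∈ Fev t u yy ↔ ρ ∈ Fev t u yy) := by
    rintro yy ρ ω ⟨hx, hs, hy⟩
    constructor <;> intro h j hj
    · rw [← hy j (by omega)]; exact h j hj
    · rw [hy j (by omega)]; exact h j hj
  have hprefE : ∀ yy : Fin N → Y, ∀ ρ ω : Traj X S Y N, cutAgr ((t : ℕ) + 1) ρ ω →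
      (ω ∈ Eev t u v xf sf yb ∩ Fev t u yy ↔ ρ ∈ Eev t u v xf sf yb ∩ Fev t u yy) := by
    rintro yy ρ ω hc
    obtain ⟨hx, hs, hy⟩ := hc
    constructor <;> rintro ⟨⟨h1, h2, h3⟩, h4⟩
    · refine ⟨⟨fun j hj => ?_, fun j hj => ?_, fun j hj => ?_⟩,
        (hprefF yy ρ ω ⟨hx, hs, hy⟩).mp h4⟩
      · rw [← hx j (by omega)]; exact h1 j hj
      · rw [← hs j (by omega)]; exact h2 j hj
      · rw [← hy j (by omega)]; exact h3 j hj
    · refine ⟨⟨fun j hj => ?_, fun j hj => ?_, fun j hj => ?_⟩,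
        (hprefF yy ρ ω ⟨hx, hs, hy⟩).mpr h4⟩
      · rw [hx j (by omega)]; exact h1 j hj
      · rw [hs j (by omega)]; exact h2 j hj
      · rw [hy j (by omega)]; exact h3 j hj
  have hprefW : ∀ (sg : Fin (N + 1) → S) (yy : Fin N → Y), ∀ ρ ω : Traj X S Y N,
      cutAgr ((t : ℕ) + 1) ρ ω →
      (ω ∈ Wev t u v xf sg ∩ Fev t u yy ↔ ρ ∈ Wev t u v xf sg ∩ Fev t u yy) := by
    rintro sg yy ρ ω hc
    obtain ⟨hx, hs, hy⟩ := hc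
    constructor <;> rintro ⟨⟨h1, h2⟩, h3⟩
    · refine ⟨⟨fun j hj => ?_, fun j hj => ?_⟩, (hprefF yy ρ ω ⟨hx, hs, hy⟩).mp h3⟩
      · rw [← hx j (by omega)]; exact h1 j hj
      · rw [← hs j (by omega)]; exact h2 j hj
    · refine ⟨⟨fun j hj => ?_, fun j hj => ?_⟩, (hprefF yy ρ ω ⟨hx, hs, hy⟩).mpr h3⟩
      · rw [hx j (by omega)]; exact h1 j hj
      · rw [hs j (by omega)]; exact h2 j hj
  -- `mea` versions of the relevant probabilities
  have hmF : ∀ yy, mea ch src ((t : ℕ) + 1) (Fev t u yy)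
      = (k : ℝ) * prE (jointP ch src) (Fev t u yy) :=
    fun yy => mea_spec ch src _ _ hdsum ω₀ _ (hprefF yy)
  have hmE : ∀ yy, mea ch src ((t : ℕ) + 1) (Eev t u v xf sf yb ∩ Fev t u yy)
      = (k : ℝ) * prE (jointP ch src) (Eev t u v xf sf yb ∩ Fev t u yy) :=
    fun yy => mea_spec ch src _ _ hdsum ω₀ _ (hprefE yy)
  have hmW : ∀ sg yy, mea ch src ((t : ℕ) + 1) (Wev t u v xf sg ∩ Fev t u yy)
      = (k : ℝ) * prE (jointP ch src) (Wev t u v xf sg ∩ Fev t u yy) :=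
    fun sg yy => mea_spec ch src _ _ hdsum ω₀ _ (hprefW sg yy)
  -- reduce to the `mea` level
  unfold condPr
  rw [div_eq_div_iff hposF.ne' hposF'.ne']
  have hcancel : ∀ a b c d : ℝ,
      (k : ℝ) * a * ((k : ℝ) * b) = (k : ℝ) * c * ((k : ℝ) * d) → a * b = c * d := by
    intro a b c d h
    have h2 : ((k : ℝ) * (k : ℝ)) ≠ 0 := mul_ne_zero hk0 hk0
    apply mul_left_cancel₀ h2
    calc (k : ℝ) * (k : ℝ) * (a * b) = (k : ℝ) * a * ((k : ℝ) * b) := by ring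
      _ = (k : ℝ) * c * ((k : ℝ) * d) := h
      _ = (k : ℝ) * (k : ℝ) * (c * d) := by ring
  apply hcancel
  rw [← hmE yh, ← hmF yh', ← hmE yh', ← hmF yh]
  -- fiber decomposition over the window values
  have hdec : ∀ yy, mea ch src ((t : ℕ) + 1) (Eev t u v xf sf yb ∩ Fev t u yy)
      = ∑ g : WinT N t u v → S,
          mea ch src ((t : ℕ) + 1) (Eev t u v xf sf yb ∩ Fev t u yy ∩ fibS t u v g) := by
    intro yy
    unfold mea
    have hpt : ∀ ρ : Traj X S Y N,
        (∑ g : WinT N t u v → S,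
          if ρ ∈ Eev t u v xf sf yb ∩ Fev t u yy ∩ fibS t u v g
            then qcut ch src ((t : ℕ) + 1) ρ else 0)
        = (if ρ ∈ Eev t u v xf sf yb ∩ Fev t u yy
            then qcut ch src ((t : ℕ) + 1) ρ else 0) := by
      intro ρ
      by_cases hρ : ρ ∈ Eev t u v xf sf yb ∩ Fev t u yy
      · rw [if_pos hρ, Finset.sum_eq_single (fun j : WinT N t u v => ρ.2.1 j.1)]
        · rw [if_pos ⟨hρ, fun j => rfl⟩]
        · intro g' _ hg'
          exact if_neg (fun hmem => hg' (funext fun j => (hmem.2 j).symm))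
        · intro hnot; exact absurd (Finset.mem_univ _) hnot
      · rw [if_neg hρ]
        exact Finset.sum_eq_zero fun g' _ => if_neg (fun hmem => hρ hmem.1)
    rw [Finset.sum_comm]
    refine (Finset.sum_congr rfl fun ρ _ => ?_).symm
    convert hpt ρ using 2
    rename_i g' hmem
    by_cases h : ρ ∈ Eev t u v xf sf yb ∩ Fev t u yy ∩ fibS t u v g' <;> simp [h]
  rw [hdec yh, hdec yh', Finset.sum_mul, Finset.sum_mul]
  refine Finset.sum_congr rfl fun g _ => ?_
  -- per-window identity
  set sg : Fin (N + 1) → S := fun j =>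
    if h : (t : ℕ) ≤ (j : ℕ) + v ∧ (j : ℕ) + u ≤ (t : ℕ) then g ⟨j, h⟩ else sf j with hsgdef
  have hsgj : ∀ (j : Fin (N + 1)) (h : (t : ℕ) ≤ (j : ℕ) + v ∧ (j : ℕ) + u ≤ (t : ℕ)),
      sg j = g ⟨j, h⟩ := fun j h => dif_pos h
  -- transfer of the window identity through `mea`
  have hW2 := halpha xf sg
  unfold condPr at hW2
  rw [div_eq_div_iff hposF.ne' hposF'.ne'] at hW2
  have hW2m : mea ch src ((t : ℕ) + 1) (Wev t u v xf sg ∩ Fev t u yh)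
        * mea ch src ((t : ℕ) + 1) (Fev t u yh')
      = mea ch src ((t : ℕ) + 1) (Wev t u v xf sg ∩ Fev t u yh')
        * mea ch src ((t : ℕ) + 1) (Fev t u yh) := by
    rw [hmW sg yh, hmW sg yh', hmF yh, hmF yh']
    linear_combination ((k : ℝ) * (k : ℝ)) * hW2
  have hsub : ∀ yy, Eev t u v xf sf yb ∩ Fev t u yy ∩ fibS t u v g
      ⊆ Wev t u v xf sg ∩ Fev t u yy := by
    rintro yy ω ⟨⟨⟨h1, h2, h3⟩, h4⟩, h5⟩
    refine ⟨⟨fun j hj => h1 j ⟨hj.1, le_of_lt hj.2⟩, fun j hj => ?_⟩, h4⟩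
    rw [hsgj j hj]; exact h5 ⟨j, hj⟩
  -- the two swap-membership facts
  have P1 : ∀ (y1 y2 : Fin N → Y) (ρ1 ρ2 : Traj X S Y N),
      ρ1 ∈ Eev t u v xf sf yb ∩ Fev t u y1 ∩ fibS t u v g →
      ρ2 ∈ Wev t u v xf sg ∩ Fev t u y2 →
      ovw (t : ℕ) u ρ2 ρ1 ∈ Eev t u v xf sf yb ∩ Fev t u y2 ∩ fibS t u v g := by
    rintro y1 y2 ρ1 ρ2 ⟨⟨⟨hE1, hE2, hE3⟩, hF1⟩, hfib⟩ ⟨⟨hW1, hW2'⟩, hF2⟩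
    refine ⟨⟨⟨fun j hj => ?_, fun j hj => ?_, fun j hj => ?_⟩, fun j hj => ?_⟩, fun j => ?_⟩
    · rw [ovw_x]
      by_cases hc : (j : ℕ) = (t : ℕ)
      · rw [if_pos hc]; exact hE1 j hj
      · rw [if_neg hc]; exact hW1 j ⟨hj.1, by omega⟩
    · have hwin : (t : ℕ) ≤ (j : ℕ) + v ∧ (j : ℕ) + u ≤ (t : ℕ) := by omega
      rw [ovw_s, if_neg (by omega), hW2' j hwin, hsgj j hwin, ← hfib ⟨j, hwin⟩]
      exact hE2 j hj
    · rw [ovw_y, if_pos hj]; exact hE3 j hj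
    · rw [ovw_y, if_neg (by omega)]; exact hF2 j hj
    · have hj2 := j.2
      rw [ovw_s, if_neg (by omega), hW2' j.1 j.2]
      exact hsgj j.1 j.2
  have P2 : ∀ (y1 y2 : Fin N → Y) (ρ1 ρ2 : Traj X S Y N),
      ρ1 ∈ Eev t u v xf sf yb ∩ Fev t u y1 ∩ fibS t u v g →
      ρ2 ∈ Wev t u v xf sg ∩ Fev t u y2 →
      ovw (t : ℕ) u ρ1 ρ2 ∈ Wev t u v xf sg ∩ Fev t u y1 := by
    rintro y1 y2 ρ1 ρ2 ⟨⟨⟨hE1, hE2, hE3⟩, hF1⟩, hfib⟩ ⟨⟨hW1, hW2'⟩, hF2⟩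
    refine ⟨⟨fun j hj => ?_, fun j hj => ?_⟩, fun j hj => ?_⟩
    · rw [ovw_x, if_neg (by omega)]; exact hE1 j ⟨hj.1, by omega⟩
    · rw [ovw_s, if_neg (by omega), hsgj j hj]; exact hfib ⟨j, hj⟩
    · rw [ovw_y, if_neg (by omega)]; exact hF1 j hj
  -- tail transfers
  have hTl1 : ∀ ρ1 ρ2 : Traj X S Y N,
      ρ1 ∈ Eev t u v xf sf yb ∩ Fev t u yh ∩ fibS t u v g →
      ρ2 ∈ Wev t u v xf sg ∩ Fev t u yh' →
      tlw ch src t (ovw (t : ℕ) u ρ2 ρ1) = tlw ch src t ρ1 := by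
    rintro ρ1 ρ2 ⟨⟨⟨hE1, hE2, hE3⟩, hF1⟩, hfib⟩ ⟨⟨hW1, hW2'⟩, hF2⟩
    unfold tlw
    have hval : (ovw (t : ℕ) u ρ2 ρ1).1 t = ρ1.1 t := by rw [ovw_x, if_pos rfl]
    have e1 : src.pol t (ovw (t : ℕ) u ρ2 ρ1).1 (ovw (t : ℕ) u ρ2 ρ1).2.1
          (ovw (t : ℕ) u ρ2 ρ1).2.2
        = src.pol t (ovw (t : ℕ) u ρ2 ρ1).1 (ovw (t : ℕ) u ρ2 ρ1).2.1 yh' :=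
      src.causal t _ _ _ _ _ _ (fun _ _ => rfl) (fun _ _ => rfl)
        (fun j hj => by rw [ovw_y, if_neg (by omega)]; exact hF2 j hj)
    have e2 : src.pol t (ovw (t : ℕ) u ρ2 ρ1).1 (ovw (t : ℕ) u ρ2 ρ1).2.1 yh'
        = src.pol t (ovw (t : ℕ) u ρ2 ρ1).1 (ovw (t : ℕ) u ρ2 ρ1).2.1 yh :=
      funext fun a => (hpol _ _ a).symm
    have e3 : src.pol t (ovw (t : ℕ) u ρ2 ρ1).1 (ovw (t : ℕ) u ρ2 ρ1).2.1 yh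
        = src.pol t ρ1.1 ρ1.2.1 yh := by
      refine hMk t _ _ _ _ _ _ (fun j hj => ?_) (fun j hj => ?_) (fun _ _ => rfl)
      · rw [ovw_x, if_neg (by omega), hW1 j hj]
        exact (hE1 j ⟨hj.1, by omega⟩).symm
      · rw [ovw_s, if_neg (by omega), hW2' j hj, hsgj j hj]
        exact (hfib ⟨j, hj⟩).symm
    have e4 : src.pol t ρ1.1 ρ1.2.1 yh = src.pol t ρ1.1 ρ1.2.1 ρ1.2.2 :=
      src.causal t _ _ _ _ _ _ (fun _ _ => rfl) (fun _ _ => rfl)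
        (fun j hj => (hF1 j hj).symm)
    rw [hval, e1, e2, e3, e4]
    congr 1
    refine Finset.prod_congr rfl fun i _ => ?_
    split_ifs with hi
    · have c1 : (ovw (t : ℕ) u ρ2 ρ1).2.2 i = ρ1.2.2 i := by rw [ovw_y, if_pos hi]
      have c2 : (ovw (t : ℕ) u ρ2 ρ1).2.1 i.succ = ρ1.2.1 i.succ := by
        rw [ovw_s, if_pos (by simp only [Fin.val_succ]; omega)]
      have c3 : (ovw (t : ℕ) u ρ2 ρ1).1 i = ρ1.1 i := by
        rw [ovw_x]
        by_cases hc : (i : ℕ) = (t : ℕ)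
        · rw [if_pos hc]
        · rw [if_neg hc, hW1 i ⟨by omega, by omega⟩]
          exact (hE1 i ⟨by omega, hi.2⟩).symm
      have c4 : (ovw (t : ℕ) u ρ2 ρ1).2.1 i.castSucc = ρ1.2.1 i.castSucc := by
        rw [ovw_s]
        by_cases hc : (t : ℕ) < (i.castSucc : ℕ) + u
        · rw [if_pos ⟨hc, by simp only [Fin.coe_castSucc]; omega⟩]
        · have hwin : (t : ℕ) ≤ (i.castSucc : ℕ) + v ∧ (i.castSucc : ℕ) + u ≤ (t : ℕ) := by
            simp only [Fin.coe_castSucc] at hc ⊢; omega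
          rw [if_neg (fun hh => hc hh.1), hW2' i.castSucc hwin, hsgj i.castSucc hwin]
          exact (hfib ⟨i.castSucc, hwin⟩).symm
      rw [c1, c2, c3, c4]
    · rfl
  have hTl2 : ∀ ρ1 ρ2 : Traj X S Y N,
      ρ1 ∈ Eev t u v xf sf yb ∩ Fev t u yh ∩ fibS t u v g →
      ρ2 ∈ Wev t u v xf sg ∩ Fev t u yh' →
      tlw ch src t (ovw (t : ℕ) u ρ1 ρ2) = tlw ch src t ρ2 := by
    rintro ρ1 ρ2 ⟨⟨⟨hE1, hE2, hE3⟩, hF1⟩, hfib⟩ ⟨⟨hW1, hW2'⟩, hF2⟩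
    unfold tlw
    have hval : (ovw (t : ℕ) u ρ1 ρ2).1 t = ρ2.1 t := by rw [ovw_x, if_pos rfl]
    have e1 : src.pol t (ovw (t : ℕ) u ρ1 ρ2).1 (ovw (t : ℕ) u ρ1 ρ2).2.1
          (ovw (t : ℕ) u ρ1 ρ2).2.2
        = src.pol t (ovw (t : ℕ) u ρ1 ρ2).1 (ovw (t : ℕ) u ρ1 ρ2).2.1 yh :=
      src.causal t _ _ _ _ _ _ (fun _ _ => rfl) (fun _ _ => rfl)
        (fun j hj => by rw [ovw_y, if_neg (by omega)]; exact hF1 j hj)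
    have e2 : src.pol t (ovw (t : ℕ) u ρ1 ρ2).1 (ovw (t : ℕ) u ρ1 ρ2).2.1 yh
        = src.pol t (ovw (t : ℕ) u ρ1 ρ2).1 (ovw (t : ℕ) u ρ1 ρ2).2.1 yh' :=
      funext fun a => hpol _ _ a
    have e3 : src.pol t (ovw (t : ℕ) u ρ1 ρ2).1 (ovw (t : ℕ) u ρ1 ρ2).2.1 yh'
        = src.pol t ρ2.1 ρ2.2.1 yh' := by
      refine hMk t _ _ _ _ _ _ (fun j hj => ?_) (fun j hj => ?_) (fun _ _ => rfl)
      · rw [ovw_x, if_neg (by omega), hE1 j ⟨hj.1, by omega⟩]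
        exact (hW1 j hj).symm
      · rw [ovw_s, if_neg (by omega), hfib ⟨j, hj⟩, ← hsgj j hj]
        exact (hW2' j hj).symm
    have e4 : src.pol t ρ2.1 ρ2.2.1 yh' = src.pol t ρ2.1 ρ2.2.1 ρ2.2.2 :=
      src.causal t _ _ _ _ _ _ (fun _ _ => rfl) (fun _ _ => rfl)
        (fun j hj => (hF2 j hj).symm)
    rw [hval, e1, e2, e3, e4]
    congr 1
    refine Finset.prod_congr rfl fun i _ => ?_
    split_ifs with hi
    · have c1 : (ovw (t : ℕ) u ρ1 ρ2).2.2 i = ρ2.2.2 i := by rw [ovw_y, if_pos hi]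
      have c2 : (ovw (t : ℕ) u ρ1 ρ2).2.1 i.succ = ρ2.2.1 i.succ := by
        rw [ovw_s, if_pos (by simp only [Fin.val_succ]; omega)]
      have c3 : (ovw (t : ℕ) u ρ1 ρ2).1 i = ρ2.1 i := by
        rw [ovw_x]
        by_cases hc : (i : ℕ) = (t : ℕ)
        · rw [if_pos hc]
        · rw [if_neg hc, hE1 i ⟨by omega, hi.2⟩]
          exact (hW1 i ⟨by omega, by omega⟩).symm
      have c4 : (ovw (t : ℕ) u ρ1 ρ2).2.1 i.castSucc = ρ2.2.1 i.castSucc := by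
        rw [ovw_s]
        by_cases hc : (t : ℕ) < (i.castSucc : ℕ) + u
        · rw [if_pos ⟨hc, by simp only [Fin.coe_castSucc]; omega⟩]
        · have hwin : (t : ℕ) ≤ (i.castSucc : ℕ) + v ∧ (i.castSucc : ℕ) + u ≤ (t : ℕ) := by
            simp only [Fin.coe_castSucc] at hc ⊢; omega
          rw [if_neg (fun hh => hc hh.1), hfib ⟨i.castSucc, hwin⟩, ← hsgj i.castSucc hwin]
          exact (hW2' i.castSucc hwin).symm
      rw [c1, c2, c3, c4]
    · rfl
  -- weight preservation under the tail swap
  have P4 : ∀ ρ1 ρ2 : Traj X S Y N,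
      ρ1 ∈ Eev t u v xf sf yb ∩ Fev t u yh ∩ fibS t u v g →
      ρ2 ∈ Wev t u v xf sg ∩ Fev t u yh' →
      qcut ch src ((t : ℕ) + 1) (ovw (t : ℕ) u ρ2 ρ1)
          * qcut ch src ((t : ℕ) + 1) (ovw (t : ℕ) u ρ1 ρ2)
        = qcut ch src ((t : ℕ) + 1) ρ1 * qcut ch src ((t : ℕ) + 1) ρ2 := by
    intro ρ1 ρ2 h1 h2
    rw [qcut_factor, qcut_factor, qcut_factor, qcut_factor,
      hdw_ovw ch src t htu, hdw_ovw ch src t htu, hTl1 ρ1 ρ2 h1 h2, hTl2 ρ1 ρ2 h1 h2]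
    ring
  -- the pair-swap identity
  have hswap : mea ch src ((t : ℕ) + 1) (Eev t u v xf sf yb ∩ Fev t u yh ∩ fibS t u v g)
        * mea ch src ((t : ℕ) + 1) (Wev t u v xf sg ∩ Fev t u yh')
      = mea ch src ((t : ℕ) + 1) (Eev t u v xf sf yb ∩ Fev t u yh' ∩ fibS t u v g)
        * mea ch src ((t : ℕ) + 1) (Wev t u v xf sg ∩ Fev t u yh) := by
    have hpairs : ∀ F G : Traj X S Y N → ℝ,
        (∑ ρ1 : Traj X S Y N, F ρ1) * (∑ ρ2 : Traj X S Y N, G ρ2)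
          = ∑ z : Traj X S Y N × Traj X S Y N, F z.1 * G z.2 := by
      intro F G
      exact (Finset.sum_mul_sum Finset.univ Finset.univ F G).trans
        (Fintype.sum_prod_type (fun z : Traj X S Y N × Traj X S Y N => F z.1 * G z.2)).symm
    unfold mea
    rw [hpairs, hpairs]
    have hinv : Function.Involutive (fun z : Traj X S Y N × Traj X S Y N =>
        (ovw (t : ℕ) u z.2 z.1, ovw (t : ℕ) u z.1 z.2)) := fun z =>
      Prod.ext (ovw_ovw _ _ z.1 z.2) (ovw_ovw _ _ z.2 z.1)
    conv_rhs => rw [← Equiv.sum_comp hinv.toPerm]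
    refine Finset.sum_congr rfl fun z _ => ?_
    rw [Function.Involutive.coe_toPerm]
    dsimp only
    by_cases h1 : z.1 ∈ Eev t u v xf sf yb ∩ Fev t u yh ∩ fibS t u v g
    · by_cases h2 : z.2 ∈ Wev t u v xf sg ∩ Fev t u yh'
      · rw [if_pos h1, if_pos h2, if_pos (P1 yh yh' z.1 z.2 h1 h2),
          if_pos (P2 yh yh' z.1 z.2 h1 h2)]
        exact (P4 z.1 z.2 h1 h2).symm
      · rw [if_neg h2, mul_zero]
        have hno : ¬(ovw (t : ℕ) u z.2 z.1 ∈ Eev t u v xf sf yb ∩ Fev t u yh' ∩ fibS t u v g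
            ∧ ovw (t : ℕ) u z.1 z.2 ∈ Wev t u v xf sg ∩ Fev t u yh) := by
          rintro ⟨c1, c2⟩
          have d2 := P2 yh' yh (ovw (t : ℕ) u z.2 z.1) (ovw (t : ℕ) u z.1 z.2) c1 c2
          rw [ovw_ovw] at d2
          exact h2 d2
        rcases not_and_or.mp hno with h | h
        · rw [if_neg h, zero_mul]
        · rw [if_neg h, mul_zero]
    · rw [if_neg h1, zero_mul]
      have hno : ¬(ovw (t : ℕ) u z.2 z.1 ∈ Eev t u v xf sf yb ∩ Fev t u yh' ∩ fibS t u v g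
          ∧ ovw (t : ℕ) u z.1 z.2 ∈ Wev t u v xf sg ∩ Fev t u yh) := by
        rintro ⟨c1, c2⟩
        have d1 := P1 yh' yh (ovw (t : ℕ) u z.2 z.1) (ovw (t : ℕ) u z.1 z.2) c1 c2
        rw [ovw_ovw] at d1
        exact h1 d1
      rcases not_and_or.mp hno with h | h
      · rw [if_neg h, zero_mul]
      · rw [if_neg h, mul_zero]
  -- conclude the per-window identity
  rcases (mea_nonneg ch src ((t : ℕ) + 1) (Wev t u v xf sg ∩ Fev t u yh')).eq_or_lt with hz | hz
  · have hFm' : 0 < mea ch src ((t : ℕ) + 1) (Fev t u yh') := by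
      rw [hmF yh']
      exact mul_pos (by exact_mod_cast hkpos) hposF'
    have h2 : mea ch src ((t : ℕ) + 1) (Wev t u v xf sg ∩ Fev t u yh) = 0 := by
      have h0 : mea ch src ((t : ℕ) + 1) (Wev t u v xf sg ∩ Fev t u yh)
          * mea ch src ((t : ℕ) + 1) (Fev t u yh') = 0 := by
        rw [hW2m, ← hz, zero_mul]
      exact (mul_eq_zero.mp h0).resolve_right hFm'.ne'
    have h10 : mea ch src ((t : ℕ) + 1) (Eev t u v xf sf yb ∩ Fev t u yh ∩ fibS t u v g)
        = 0 :=
      le_antisymm ((mea_mono ch src _ (hsub yh)).trans (le_of_eq h2)) (mea_nonneg _ _ _ _)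
    have h10' : mea ch src ((t : ℕ) + 1) (Eev t u v xf sf yb ∩ Fev t u yh' ∩ fibS t u v g)
        = 0 :=
      le_antisymm ((mea_mono ch src _ (hsub yh')).trans (le_of_eq hz.symm)) (mea_nonneg _ _ _ _)
    rw [h10, h10', zero_mul, zero_mul]
  · apply mul_right_cancel₀ hz.ne'
    calc mea ch src ((t : ℕ) + 1) (Eev t u v xf sf yb ∩ Fev t u yh ∩ fibS t u v g)
          * mea ch src ((t : ℕ) + 1) (Fev t u yh')
          * mea ch src ((t : ℕ) + 1) (Wev t u v xf sg ∩ Fev t u yh')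
        = mea ch src ((t : ℕ) + 1) (Eev t u v xf sf yb ∩ Fev t u yh ∩ fibS t u v g)
            * mea ch src ((t : ℕ) + 1) (Wev t u v xf sg ∩ Fev t u yh')
            * mea ch src ((t : ℕ) + 1) (Fev t u yh') := by ring
      _ = mea ch src ((t : ℕ) + 1) (Eev t u v xf sf yb ∩ Fev t u yh' ∩ fibS t u v g)
            * mea ch src ((t : ℕ) + 1) (Wev t u v xf sg ∩ Fev t u yh)
            * mea ch src ((t : ℕ) + 1) (Fev t u yh') := by rw [hswap]
      _ = mea ch src ((t : ℕ) + 1) (Eev t u v xf sf yb ∩ Fev t u yh' ∩ fibS t u v g)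
            * (mea ch src ((t : ℕ) + 1) (Wev t u v xf sg ∩ Fev t u yh)
              * mea ch src ((t : ℕ) + 1) (Fev t u yh')) := by ring
      _ = mea ch src ((t : ℕ) + 1) (Eev t u v xf sf yb ∩ Fev t u yh' ∩ fibS t u v g)
            * (mea ch src ((t : ℕ) + 1) (Wev t u v xf sg ∩ Fev t u yh')
              * mea ch src ((t : ℕ) + 1) (Fev t u yh)) := by rw [hW2m]
      _ = mea ch src ((t : ℕ) + 1) (Eev t u v xf sf yb ∩ Fev t u yh' ∩ fibS t u v g)
            * mea ch src ((t : ℕ) + 1) (Fev t u yh)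
            * mea ch src ((t : ℕ) + 1) (Wev t u v xf sg ∩ Fev t u yh') := by ring

end Statement10Aux

/-- **sufficient-statistic property of the a posteriori
vector.** For a non-controllable FSC with a source in `𝒫'_v(u,u)`
(`0 ≤ u ≤ v`), a time `u+1 ≤ t ≤ N` (0-based: `u ≤ (t:ℕ)`), and two
positive-probability output histories `y^{t-u-1}`, `ỹ^{t-u-1}` inducing
the same a posteriori vector `α_{t-1}`, the conditional joint law of
`(X_{t-v}^t, S_{t-v-1}, Y_{t-u}^t)` given the past outputs is the same
for the two histories, i.e. it depends on the past outputs only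
through `α_{t-1}`. -/
theorem statement10 {X S Y : Type} [Fintype X] [Fintype S] [Fintype Y] {N u : ℕ}
    (ch : NCFSC X S Y) (src : Source X S Y N u) (v : ℕ) (huv : u ≤ v)
    (hM : IsMarkov v src) (hA : AlphaPolicy v ch src)
    (t : Fin N) (htu : u ≤ (t : ℕ)) (yh yh' : Fin N → Y)
    (hpos : 0 < prE (jointP ch src)
      {ω : Traj X S Y N | ∀ j : Fin N, (j : ℕ) + u + 1 ≤ (t : ℕ) → ω.2.2 j = yh j})
    (hpos' : 0 < prE (jointP ch src)
      {ω : Traj X S Y N | ∀ j : Fin N, (j : ℕ) + u + 1 ≤ (t : ℕ) → ω.2.2 j = yh' j})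
    (halpha : alphaWinEq v ch src t yh yh') :
    ∀ (xf : Fin N → X) (sf : Fin (N + 1) → S) (yb : Fin N → Y),
      condPr (jointP ch src)
          {ω : Traj X S Y N |
            (∀ j : Fin N, (t : ℕ) ≤ (j : ℕ) + v ∧ (j : ℕ) ≤ (t : ℕ) → ω.1 j = xf j) ∧
              (∀ j : Fin (N + 1), (j : ℕ) + v = (t : ℕ) → ω.2.1 j = sf j) ∧
                ∀ j : Fin N, (t : ℕ) ≤ (j : ℕ) + u ∧ (j : ℕ) ≤ (t : ℕ) → ω.2.2 j = yb j}
          {ω : Traj X S Y N | ∀ j : Fin N, (j : ℕ) + u + 1 ≤ (t : ℕ) → ω.2.2 j = yh j} =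
        condPr (jointP ch src)
          {ω : Traj X S Y N |
            (∀ j : Fin N, (t : ℕ) ≤ (j : ℕ) + v ∧ (j : ℕ) ≤ (t : ℕ) → ω.1 j = xf j) ∧
              (∀ j : Fin (N + 1), (j : ℕ) + v = (t : ℕ) → ω.2.1 j = sf j) ∧
                ∀ j : Fin N, (t : ℕ) ≤ (j : ℕ) + u ∧ (j : ℕ) ≤ (t : ℕ) → ω.2.2 j = yb j}
          {ω : Traj X S Y N | ∀ j : Fin N, (j : ℕ) + u + 1 ≤ (t : ℕ) → ω.2.2 j = yh' j} := by
  intro xf sf yb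
  exact statement10_aux ch src v huv hM t htu yh yh' hpos hpos'
    (hA t yh yh' hpos hpos' halpha) (fun xg sg => halpha xg sg) xf sf yb

end FSCPaper
end
end
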